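/- arXiv:1603.05515 — 12 statements merged into one kernel-verified Lean document; each statement's English description precedes it below -/
import Mathlib

section
/- Let K_n (n even) be the complex pentadiagonal 2-Toeplitz matrix whose diagonal alternates a_1, a_2, whose second superdiagonal alternates b_1, b_2, and whose second subdiagonal alternates c_1, c_2 (all other entries zero). If α ∈ ℂ satisfies A_{n+1}(α)=0 or B_n(α)=0 (where {A_i}, {B_i} are the associated polynomial sequences), then α is an eigenvalue of K_n. -/
open Polynomial Matrix

noncomputable def pentaK (n : ℕ) (a1 a2 b1 b2 c1 c2 : ℂ) : Matrix (Fin n) (Fin n) ℂ :=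
  Matrix.of fun i j =>
    if i.val = j.val then (if i.val % 2 = 0 then a1 else a2)
    else if j.val = i.val + 2 then (if i.val % 2 = 0 then b1 else b2)
    else if i.val = j.val + 2 then (if j.val % 2 = 0 then c1 else c2)
    else 0

lemma penta_aux (a1 a2 b1 b2 c1 c2 α : ℂ) (n : ℕ) (hn2 : 2 ≤ n) (hne : n % 2 = 0)
    (w : ℕ → ℂ)
    (h0 : α * w 0 = a1 * w 0 + b1 * w 2)
    (h1 : α * w 1 = a2 * w 1 + b2 * w 3)
    (heven : ∀ j, 2 ≤ j → j % 2 = 0 → α * w j = c1 * w (j-2) + a1 * w j + b1 * w (j+2))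
    (hodd : ∀ j, 2 ≤ j → j % 2 = 1 → α * w j = c2 * w (j-2) + a2 * w j + b2 * w (j+2))
    (hwn : w n = 0) (hwn1 : w (n+1) = 0)
    (hnz : ∃ j, j < n ∧ w j ≠ 0) :
    Module.End.HasEigenvalue (Matrix.toLin' (pentaK n a1 a2 b1 b2 c1 c2)) α := by
  obtain ⟨j0, hj0, hwj0⟩ := hnz
  have key : ∀ m, m < n →
      (∑ k ∈ Finset.range n,
        (if m = k then (if m % 2 = 0 then a1 else a2)
          else if k = m + 2 then (if m % 2 = 0 then b1 else b2)
          else if m = k + 2 then (if k % 2 = 0 then c1 else c2)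
          else 0) * w k) = α * w m := by
    intro m hm
    have split : ∀ k,
        (if m = k then (if m % 2 = 0 then a1 else a2)
          else if k = m + 2 then (if m % 2 = 0 then b1 else b2)
          else if m = k + 2 then (if k % 2 = 0 then c1 else c2)
          else 0) * w k
        = (if k = m then (if m % 2 = 0 then a1 else a2) * w m else 0)
          + (if k = m + 2 then (if m % 2 = 0 then b1 else b2) * w (m + 2) else 0)
          + (if k + 2 = m then (if k % 2 = 0 then c1 else c2) * w k else 0) := by
      intro k
      split_ifs <;> first
        | (exfalso; omega)
        | (subst_vars; ring)
    rw [Finset.sum_congr rfl (fun k _ => split k)]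
    rw [Finset.sum_add_distrib, Finset.sum_add_distrib]
    have S1 : (∑ k ∈ Finset.range n,
        (if k = m then (if m % 2 = 0 then a1 else a2) * w m else 0))
        = (if m % 2 = 0 then a1 else a2) * w m := by
      rw [Finset.sum_ite_eq' (Finset.range n) m]
      simp [Finset.mem_range, hm]
    have S2 : (∑ k ∈ Finset.range n,
        (if k = m + 2 then (if m % 2 = 0 then b1 else b2) * w (m + 2) else 0))
        = (if m + 2 < n then (if m % 2 = 0 then b1 else b2) * w (m + 2) else 0) := by
      rw [Finset.sum_ite_eq' (Finset.range n) (m + 2)]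
      simp [Finset.mem_range]
    rw [S1, S2]
    rcases Nat.lt_or_ge m 2 with h2 | h2
    · have S3 : (∑ k ∈ Finset.range n,
          (if k + 2 = m then (if k % 2 = 0 then c1 else c2) * w k else 0)) = 0 := by
        apply Finset.sum_eq_zero
        intro k _
        rw [if_neg (by omega)]
      rw [S3]
      interval_cases m
      · rw [show (if (0 : ℕ) % 2 = 0 then a1 else a2) = a1 from rfl,
          show (if (0 : ℕ) % 2 = 0 then b1 else b2) = b1 from rfl]
        by_cases hb : 0 + 2 < n
        · rw [if_pos hb]
          linear_combination -h0
        · have hw2 : w (0 + 2) = 0 := by rw [show (0 + 2 : ℕ) = n by omega]; exact hwn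
          rw [if_neg hb]
          linear_combination -h0 - b1 * hw2
      · rw [show (if (1 : ℕ) % 2 = 0 then a1 else a2) = a2 from rfl,
          show (if (1 : ℕ) % 2 = 0 then b1 else b2) = b2 from rfl]
        by_cases hb : 1 + 2 < n
        · rw [if_pos hb]
          linear_combination -h1
        · have hw3 : w (1 + 2) = 0 := by rw [show (1 + 2 : ℕ) = n + 1 by omega]; exact hwn1
          rw [if_neg hb]
          linear_combination -h1 - b2 * hw3
    · have S3 : (∑ k ∈ Finset.range n,
          (if k + 2 = m then (if k % 2 = 0 then c1 else c2) * w k else 0))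
          = (if (m - 2) % 2 = 0 then c1 else c2) * w (m - 2) := by
        have e : ∀ k, (if k + 2 = m then (if k % 2 = 0 then c1 else c2) * w k else 0)
            = (if k = m - 2 then (if (m - 2) % 2 = 0 then c1 else c2) * w (m - 2) else 0) := by
          intro k
          by_cases h : k + 2 = m
          · have hk : k = m - 2 := by omega
            subst hk
            rw [if_pos h, if_pos rfl]
          · rw [if_neg h, if_neg (by omega)]
        rw [Finset.sum_congr rfl (fun k _ => e k)]
        rw [Finset.sum_ite_eq' (Finset.range n) (m - 2)]
        simp only [Finset.mem_range, if_pos (show m - 2 < n by omega)]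
      rw [S3]
      have hpar : (m - 2) % 2 = m % 2 := by omega
      rw [hpar]
      rcases Nat.mod_two_eq_zero_or_one m with hp | hp
      · simp only [hp, reduceIte]
        have hrec := heven m h2 hp
        by_cases hb : m + 2 < n
        · rw [if_pos hb]; linear_combination -hrec
        · have hw : w (m + 2) = 0 := by rw [show m + 2 = n by omega]; exact hwn
          rw [if_neg hb]; linear_combination -hrec - b1 * hw
      · rw [if_neg (show ¬ m % 2 = 0 by omega), if_neg (show ¬ m % 2 = 0 by omega),
          if_neg (show ¬ m % 2 = 0 by omega)]
        have hrec := hodd m h2 hp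
        by_cases hb : m + 2 < n
        · rw [if_pos hb]; linear_combination -hrec
        · have hw : w (m + 2) = 0 := by rw [show m + 2 = n + 1 by omega]; exact hwn1
          rw [if_neg hb]; linear_combination -hrec - b2 * hw
  set v : Fin n → ℂ := fun i => w i.val with hv
  have hvne : v ≠ 0 := by
    intro h
    apply hwj0
    have := congrFun h ⟨j0, hj0⟩
    simpa [hv] using this
  apply Module.End.hasEigenvalue_of_hasEigenvector (x := v)
  refine ⟨Module.End.mem_eigenspace_iff.mpr ?_, hvne⟩
  rw [Matrix.toLin'_apply]
  funext i
  have hmv : (pentaK n a1 a2 b1 b2 c1 c2).mulVec v i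
      = ∑ k ∈ Finset.range n,
        (if i.val = k then (if i.val % 2 = 0 then a1 else a2)
          else if k = i.val + 2 then (if i.val % 2 = 0 then b1 else b2)
          else if i.val = k + 2 then (if k % 2 = 0 then c1 else c2)
          else 0) * w k := by
    rw [Matrix.mulVec, dotProduct]
    rw [← Fin.sum_univ_eq_sum_range (fun k =>
        (if i.val = k then (if i.val % 2 = 0 then a1 else a2)
          else if k = i.val + 2 then (if i.val % 2 = 0 then b1 else b2)
          else if i.val = k + 2 then (if k % 2 = 0 then c1 else c2)
          else 0) * w k) n]
    rfl
  rw [hmv, key i.val i.isLt]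
  simp [hv]

lemma eval_rec (cc aa bb α : ℂ) (C : ℕ → Polynomial ℂ) (j : ℕ) (hj : 2 ≤ j)
    (h : Polynomial.X * C (j + 1 - 1) =
      Polynomial.C cc * C (j + 1 - 3) + Polynomial.C aa * C (j + 1 - 1)
        + Polynomial.C bb * C (j + 1 + 1)) :
    α * (C j).eval α =
      cc * (C (j - 2)).eval α + aa * (C j).eval α + bb * (C (j + 2)).eval α := by
  rw [show j + 1 - 1 = j by omega, show j + 1 - 3 = j - 2 by omega,
    show j + 1 + 1 = j + 2 by omega] at h
  have := congrArg (Polynomial.eval α) h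
  simpa using this

theorem stmt5 (a1 a2 b1 b2 c1 c2 : ℂ) (hb1 : b1 ≠ 0) (hb2 : b2 ≠ 0) (hc1 : c1 ≠ 0) (hc2 : c2 ≠ 0)
    (t : ℕ) (ht : 1 ≤ t) (n : ℕ) (hn : n = 2 * t)
    (A B : ℕ → Polynomial ℂ)
    (A0 : A 0 = 0) (A1 : A 1 = 1)
    (hAr0 : Polynomial.X * A 0 = Polynomial.C a1 * A 0 + Polynomial.C b1 * A 2)
    (hAr1 : Polynomial.X * A 1 = Polynomial.C a2 * A 1 + Polynomial.C b2 * A 3)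
    (hAodd : ∀ i, 3 ≤ i → Odd i →
      Polynomial.X * A (i - 1) =
        Polynomial.C c1 * A (i - 3) + Polynomial.C a1 * A (i - 1) + Polynomial.C b1 * A (i + 1))
    (hAeven : ∀ i, 3 ≤ i → Even i →
      Polynomial.X * A (i - 1) =
        Polynomial.C c2 * A (i - 3) + Polynomial.C a2 * A (i - 1) + Polynomial.C b2 * A (i + 1))
    (B0 : B 0 = 1) (B1 : B 1 = 0)
    (hBr0 : Polynomial.X * B 0 = Polynomial.C a1 * B 0 + Polynomial.C b1 * B 2)
    (hBr1 : Polynomial.X * B 1 = Polynomial.C a2 * B 1 + Polynomial.C b2 * B 3)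
    (hBodd : ∀ i, 3 ≤ i → Odd i →
      Polynomial.X * B (i - 1) =
        Polynomial.C c1 * B (i - 3) + Polynomial.C a1 * B (i - 1) + Polynomial.C b1 * B (i + 1))
    (hBeven : ∀ i, 3 ≤ i → Even i →
      Polynomial.X * B (i - 1) =
        Polynomial.C c2 * B (i - 3) + Polynomial.C a2 * B (i - 1) + Polynomial.C b2 * B (i + 1))
    (α : ℂ) (hα : (A (n + 1)).eval α = 0 ∨ (B n).eval α = 0) :
    Module.End.HasEigenvalue
      (Matrix.toLin' (pentaK n a1 a2 b1 b2 c1 c2)) α := by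
  have hn2 : 2 ≤ n := by omega
  have hne : n % 2 = 0 := by omega
  have hCb1 : (Polynomial.C b1 : Polynomial ℂ) ≠ 0 := Polynomial.C_ne_zero.mpr hb1
  have hCb2 : (Polynomial.C b2 : Polynomial ℂ) ≠ 0 := Polynomial.C_ne_zero.mpr hb2
  rcases hα with hA | hB
  · -- even-indexed A's vanish as polynomials
    have hAev : ∀ k, A (2 * k) = 0 ∧ A (2 * (k + 1)) = 0 := by
      intro k
      induction k with
      | zero =>
        have hA2 : A 2 = 0 := by
          have h := hAr0
          rw [A0] at h
          have hz : Polynomial.C b1 * A 2 = 0 := by linear_combination -h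
          rcases mul_eq_zero.mp hz with h' | h'
          · exact absurd h' hCb1
          · exact h'
        exact ⟨by simpa using A0, by simpa using hA2⟩
      | succ k ih =>
        refine ⟨ih.2, ?_⟩
        have h := hAodd (2 * k + 3) (by omega) ⟨k + 1, by ring⟩
        rw [show 2 * k + 3 - 1 = 2 * (k + 1) by omega, show 2 * k + 3 - 3 = 2 * k by omega,
          show 2 * k + 3 + 1 = 2 * (k + 1 + 1) by omega, ih.1, ih.2] at h
        have hz : Polynomial.C b1 * A (2 * (k + 1 + 1)) = 0 := by linear_combination -h
        rcases mul_eq_zero.mp hz with h' | h'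
        · exact absurd h' hCb1
        · exact h'
    refine penta_aux a1 a2 b1 b2 c1 c2 α n hn2 hne (fun j => (A j).eval α) ?_ ?_ ?_ ?_ ?_ ?_ ?_
    · simpa using congrArg (Polynomial.eval α) hAr0
    · simpa using congrArg (Polynomial.eval α) hAr1
    · intro j hj hp
      exact eval_rec c1 a1 b1 α A j hj (hAodd (j + 1) (by omega) ⟨j / 2, by omega⟩)
    · intro j hj hp
      exact eval_rec c2 a2 b2 α A j hj (hAeven (j + 1) (by omega) ⟨(j + 1) / 2, by omega⟩)
    · show (A n).eval α = 0
      have : A n = 0 := by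
        rw [hn]
        exact (hAev t).1
      rw [this]
      simp
    · exact hA
    · exact ⟨1, by omega, by show (A 1).eval α ≠ 0; rw [A1]; simp⟩
  · -- odd-indexed B's vanish as polynomials
    have hBodd' : ∀ k, B (2 * k + 1) = 0 ∧ B (2 * k + 3) = 0 := by
      intro k
      induction k with
      | zero =>
        have hB3 : B 3 = 0 := by
          have h := hBr1
          rw [B1] at h
          have hz : Polynomial.C b2 * B 3 = 0 := by linear_combination -h
          rcases mul_eq_zero.mp hz with h' | h'
          · exact absurd h' hCb2
          · exact h'
        exact ⟨by simpa using B1, by simpa using hB3⟩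
      | succ k ih =>
        refine ⟨by rw [show 2 * (k + 1) + 1 = 2 * k + 3 by omega]; exact ih.2, ?_⟩
        have h := hBeven (2 * k + 4) (by omega) ⟨k + 2, by ring⟩
        rw [show 2 * k + 4 - 1 = 2 * k + 3 by omega, show 2 * k + 4 - 3 = 2 * k + 1 by omega,
          show 2 * k + 4 + 1 = 2 * (k + 1) + 3 by omega, ih.1, ih.2] at h
        have hz : Polynomial.C b2 * B (2 * (k + 1) + 3) = 0 := by linear_combination -h
        rcases mul_eq_zero.mp hz with h' | h'
        · exact absurd h' hCb2
        · exact h'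
    refine penta_aux a1 a2 b1 b2 c1 c2 α n hn2 hne (fun j => (B j).eval α) ?_ ?_ ?_ ?_ ?_ ?_ ?_
    · simpa using congrArg (Polynomial.eval α) hBr0
    · simpa using congrArg (Polynomial.eval α) hBr1
    · intro j hj hp
      exact eval_rec c1 a1 b1 α B j hj (hBodd (j + 1) (by omega) ⟨j / 2, by omega⟩)
    · intro j hj hp
      exact eval_rec c2 a2 b2 α B j hj (hBeven (j + 1) (by omega) ⟨(j + 1) / 2, by omega⟩)
    · exact hB
    · have : B (n + 1) = 0 := by
        rcases Nat.exists_eq_add_of_le ht with ⟨k, hk⟩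
        have := (hBodd' (t - 1)).2
        rw [show 2 * (t - 1) + 3 = n + 1 by omega] at this
        rw [this]
      show (B (n + 1)).eval α = 0
      rw [this]
      simp
    · exact ⟨0, by omega, by show (B 0).eval α ≠ 0; rw [B0]; simp⟩
end

section
/- For n even, the characteristic polynomial of the pentadiagonal 2-Toeplitz matrix K_n factors as det(x·I_n − K_n) = (b_1·b_2)^{n/2} · A_{n+1}(x) · B_n(x), where {A_i} and {B_i} are the associated polynomial sequences. -/
open Polynomial Matrix

/-- Generic tridiagonal Toeplitz matrix. -/
def tri {α : Type*} [Zero α] (k : ℕ) (d e f : α) : Matrix (Fin k) (Fin k) α :=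
  Matrix.of fun i j =>
    if (i : ℕ) = j then d else if (j : ℕ) = (i : ℕ) + 1 then e
    else if (i : ℕ) = (j : ℕ) + 1 then f else 0

section TriDet

variable {α : Type*} [CommRing α]

lemma tri_sub_succ (k : ℕ) (d e f : α) :
    (tri (k+1) d e f).submatrix Fin.succ Fin.succ = tri k d e f := by
  ext i j
  simp only [submatrix_apply, tri, of_apply, Fin.val_succ]
  split_ifs <;> first | rfl | omega | contradiction

lemma tri_det_rec (k : ℕ) (d e f : α) :
    (tri (k+2) d e f).det = d * (tri (k+1) d e f).det - e * f * (tri k d e f).det := by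
  rw [show (k+2) = (k+1).succ from rfl, Matrix.det_succ_column_zero]
  rw [Fin.sum_univ_succ, Fin.sum_univ_succ]
  have hz : ∀ i : Fin k, (tri (k+2) d e f) i.succ.succ 0 = 0 := by
    intro i
    simp only [tri, of_apply, Fin.val_succ, Fin.val_zero]
    split_ifs <;> first | rfl | omega | contradiction
  have hrest : ∑ i : Fin k, (-1 : α) ^ ((i.succ.succ : Fin (k+2)) : ℕ) *
      (tri (k+2) d e f) i.succ.succ 0 *
      ((tri (k+2) d e f).submatrix i.succ.succ.succAbove Fin.succ).det = 0 := by
    apply Finset.sum_eq_zero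
    intro i _
    rw [hz i]; ring
  rw [hrest]
  have h00 : (tri (k+2) d e f) 0 0 = d := by simp [tri]
  have h10 : (tri (k+2) d e f) (0:Fin (k+1)).succ 0 = f := by
    simp only [tri, of_apply, Fin.val_succ, Fin.val_zero]; norm_num
  have hsub0 : (tri (k+2) d e f).submatrix (Fin.succAbove 0) Fin.succ = tri (k+1) d e f := by
    rw [Fin.succAbove_zero]; exact tri_sub_succ _ _ _ _
  set N := (tri (k+2) d e f).submatrix ((0:Fin (k+1)).succ.succAbove) Fin.succ with hN
  have hNdet : N.det = e * (tri k d e f).det := by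
    rw [Matrix.det_succ_row_zero]
    rw [Fin.sum_univ_succ]
    have hN00 : N 0 0 = e := by
      simp [hN, tri, Fin.succAbove]
    have hNz : ∀ j : Fin k, N 0 j.succ = 0 := by
      intro j
      simp only [hN, submatrix_apply, tri, of_apply]
      have h1 : (((0:Fin (k+1)).succ.succAbove 0 : Fin (k+2)) : ℕ) = 0 := by
        simp [Fin.succAbove]
      rw [h1]
      simp only [Fin.val_succ, Fin.val_succ]
      split_ifs <;> first | rfl | omega | contradiction
    have hrest2 : ∑ j : Fin k, (-1:α) ^ ((j.succ : Fin (k+1)) : ℕ) * N 0 j.succ *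
        (N.submatrix Fin.succ j.succ.succAbove).det = 0 := by
      apply Finset.sum_eq_zero; intro j _; rw [hNz j]; ring
    rw [hrest2, hN00]
    have hsub : N.submatrix Fin.succ ((0 : Fin (k+1)).succAbove) = tri k d e f := by
      rw [Fin.succAbove_zero]
      ext i j
      simp only [hN, submatrix_apply, tri, of_apply]
      have : (((0:Fin (k+1)).succ.succAbove i.succ : Fin (k+2)) : ℕ) = (i:ℕ) + 2 := by
        simp [Fin.succAbove, Fin.lt_def]
      rw [this]
      simp only [Fin.val_succ]
      split_ifs <;> first | rfl | omega | contradiction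
    rw [hsub]
    simp
  rw [h00, h10, hsub0, hNdet]
  simp only [Fin.val_zero, Fin.val_succ, pow_zero, pow_one]
  ring

end TriDet

lemma charmatrix_tri (k : ℕ) (a b c : ℂ) :
    charmatrix (tri k a b c) = tri k (X - C a) (-C b) (-C c) := by
  ext i j
  by_cases h : i = j
  · subst h
    rw [charmatrix_apply_eq]
    simp [tri]
  · have hv : (i:ℕ) ≠ (j:ℕ) := fun hh => h (Fin.ext hh)
    rw [charmatrix_apply_ne _ _ _ h]
    simp only [tri, of_apply, if_neg hv]
    split_ifs <;> simp

lemma charpoly_tri_zero (a b c : ℂ) : (tri 0 a b c).charpoly = 1 := by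
  simp [Matrix.charpoly, Matrix.det_fin_zero]

lemma charpoly_tri_one (a b c : ℂ) : (tri 1 a b c).charpoly = X - C a := by
  rw [Matrix.charpoly, charmatrix_tri, Matrix.det_fin_one]
  simp [tri]

lemma charpoly_tri_rec (k : ℕ) (a b c : ℂ) :
    (tri (k+2) a b c).charpoly =
      (X - C a) * (tri (k+1) a b c).charpoly - (C b * C c) * (tri k a b c).charpoly := by
  unfold Matrix.charpoly
  rw [charmatrix_tri, charmatrix_tri, charmatrix_tri, tri_det_rec]
  ring

/-- The even/odd interleaving equivalence. -/
def pairEquiv (t : ℕ) : Fin t ⊕ Fin t ≃ Fin (2*t) where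
  toFun x := Sum.elim (fun i : Fin t => (⟨2*(i:ℕ), by omega⟩ : Fin (2*t)))
    (fun i : Fin t => (⟨2*(i:ℕ)+1, by omega⟩ : Fin (2*t))) x
  invFun k := if h : (k : ℕ) % 2 = 0 then Sum.inl ⟨(k:ℕ)/2, by omega⟩
    else Sum.inr ⟨(k:ℕ)/2, by omega⟩
  left_inv := by
    rintro (i|i) <;> simp only [Sum.elim_inl, Sum.elim_inr]
    · erw [dif_pos (show (2*(i:ℕ)) % 2 = 0 by omega)]
      exact congrArg Sum.inl (Fin.ext (by show (2*(i:ℕ))/2 = i; omega))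
    · erw [dif_neg (show ¬ (2*(i:ℕ)+1) % 2 = 0 by omega)]
      exact congrArg Sum.inr (Fin.ext (by show (2*(i:ℕ)+1)/2 = i; omega))
  right_inv := by
    intro k
    dsimp only
    by_cases h : (k:ℕ) % 2 = 0
    · rw [dif_pos h]
      simp only [Sum.elim_inl]
      exact Fin.ext (by show 2*((k:ℕ)/2) = k; omega)
    · rw [dif_neg h]
      simp only [Sum.elim_inr]
      exact Fin.ext (by show 2*((k:ℕ)/2)+1 = k; omega)

lemma penta_submatrix (t : ℕ) (a1 a2 b1 b2 c1 c2 : ℂ) :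
    (pentaK (2*t) a1 a2 b1 b2 c1 c2).submatrix (pairEquiv t) (pairEquiv t) =
      fromBlocks (tri t a1 b1 c1) 0 0 (tri t a2 b2 c2) := by
  ext x y
  rcases x with i | i <;> rcases y with j | j <;>
    simp only [submatrix_apply, pairEquiv, Equiv.coe_fn_mk, Sum.elim_inl, Sum.elim_inr,
      fromBlocks_apply₁₁, fromBlocks_apply₁₂, fromBlocks_apply₂₁, fromBlocks_apply₂₂,
      pentaK, tri, of_apply, Matrix.zero_apply] <;>
    split_ifs <;> first | rfl | omega | contradiction

theorem stmt6 (a1 a2 b1 b2 c1 c2 : ℂ) (hb1 : b1 ≠ 0) (hb2 : b2 ≠ 0) (hc1 : c1 ≠ 0) (hc2 : c2 ≠ 0)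
    (t : ℕ) (ht : 1 ≤ t) (n : ℕ) (hn : n = 2 * t)
    (A B : ℕ → Polynomial ℂ)
    (A0 : A 0 = 0) (A1 : A 1 = 1)
    (hAr0 : Polynomial.X * A 0 = Polynomial.C a1 * A 0 + Polynomial.C b1 * A 2)
    (hAr1 : Polynomial.X * A 1 = Polynomial.C a2 * A 1 + Polynomial.C b2 * A 3)
    (hAodd : ∀ i, 3 ≤ i → Odd i →
      Polynomial.X * A (i - 1) =
        Polynomial.C c1 * A (i - 3) + Polynomial.C a1 * A (i - 1) + Polynomial.C b1 * A (i + 1))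
    (hAeven : ∀ i, 3 ≤ i → Even i →
      Polynomial.X * A (i - 1) =
        Polynomial.C c2 * A (i - 3) + Polynomial.C a2 * A (i - 1) + Polynomial.C b2 * A (i + 1))
    (B0 : B 0 = 1) (B1 : B 1 = 0)
    (hBr0 : Polynomial.X * B 0 = Polynomial.C a1 * B 0 + Polynomial.C b1 * B 2)
    (hBr1 : Polynomial.X * B 1 = Polynomial.C a2 * B 1 + Polynomial.C b2 * B 3)
    (hBodd : ∀ i, 3 ≤ i → Odd i →
      Polynomial.X * B (i - 1) =
        Polynomial.C c1 * B (i - 3) + Polynomial.C a1 * B (i - 1) + Polynomial.C b1 * B (i + 1))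
    (hBeven : ∀ i, 3 ≤ i → Even i →
      Polynomial.X * B (i - 1) =
        Polynomial.C c2 * B (i - 3) + Polynomial.C a2 * B (i - 1) + Polynomial.C b2 * B (i + 1)) :
    (pentaK n a1 a2 b1 b2 c1 c2).charpoly =
      Polynomial.C ((b1 * b2) ^ t) * A (n + 1) * B n := by
  subst hn
  -- the odd-index block and the A sequence
  have keyA : ∀ k : ℕ, (tri k a2 b2 c2).charpoly = (C b2) ^ k * A (2*k+1) := by
    have main : ∀ k : ℕ, (tri k a2 b2 c2).charpoly = (C b2) ^ k * A (2*k+1) ∧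
        (tri (k+1) a2 b2 c2).charpoly = (C b2) ^ (k+1) * A (2*(k+1)+1) := by
      intro k
      induction k with
      | zero =>
        constructor
        · rw [charpoly_tri_zero]; simp [A1]
        · rw [charpoly_tri_one]
          have h3 : C b2 * A 3 = X - C a2 := by
            rw [A1] at hAr1
            linear_combination -hAr1
          rw [pow_succ, pow_zero, one_mul, show 2*(0+1)+1 = 3 from rfl, h3]
      | succ k ih =>
        refine ⟨ih.2, ?_⟩
        have hr := hAeven (2*k+4) (by omega) ⟨k+2, by ring⟩
        have e1 : 2*k+4-1 = 2*k+3 := rfl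
        have e3 : 2*k+4-3 = 2*k+1 := rfl
        have e6 : 2*k+4+1 = 2*k+5 := rfl
        rw [e1, e3, e6] at hr
        rw [show k+1+1 = k+2 from rfl, charpoly_tri_rec, ih.1, ih.2]
        have e4 : 2*(k+1)+1 = 2*k+3 := by ring
        have e5 : 2*(k+2)+1 = 2*k+5 := by ring
        rw [e4, e5]
        linear_combination (C b2 ^ (k+1)) * hr
    exact fun k => (main k).1
  -- the even-index block and the B sequence
  have keyB : ∀ k : ℕ, (tri k a1 b1 c1).charpoly = (C b1) ^ k * B (2*k) := by
    have main : ∀ k : ℕ, (tri k a1 b1 c1).charpoly = (C b1) ^ k * B (2*k) ∧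
        (tri (k+1) a1 b1 c1).charpoly = (C b1) ^ (k+1) * B (2*(k+1)) := by
      intro k
      induction k with
      | zero =>
        constructor
        · rw [charpoly_tri_zero]; simp [B0]
        · rw [charpoly_tri_one]
          have h2 : C b1 * B 2 = X - C a1 := by
            rw [B0] at hBr0
            linear_combination -hBr0
          rw [pow_succ, pow_zero, one_mul, show 2*(0+1) = 2 from rfl, h2]
      | succ k ih =>
        refine ⟨ih.2, ?_⟩
        have hr := hBodd (2*k+3) (by omega) ⟨k+1, by ring⟩
        have e1 : 2*k+3-1 = 2*k+2 := rfl
        have e3 : 2*k+3-3 = 2*k := rfl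
        have e6 : 2*k+3+1 = 2*k+4 := rfl
        rw [e1, e3, e6] at hr
        rw [show k+1+1 = k+2 from rfl, charpoly_tri_rec, ih.1, ih.2]
        have e4 : 2*(k+1) = 2*k+2 := by ring
        have e5 : 2*(k+2) = 2*k+4 := by ring
        rw [e4, e5]
        linear_combination (C b1 ^ (k+1)) * hr
    exact fun k => (main k).1
  -- reduce the pentadiagonal matrix to the block-diagonal form
  have hre := Matrix.charpoly_reindex (R := ℂ) (pairEquiv t).symm
    (pentaK (2*t) a1 a2 b1 b2 c1 c2)
  rw [Matrix.reindex_apply, Equiv.symm_symm, penta_submatrix] at hre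
  rw [← hre, Matrix.charpoly_fromBlocks_zero₁₂, keyA t, keyB t]
  rw [mul_pow, C_mul]
  rw [← C_pow, ← C_pow]
  ring
end

section
/- For n odd, the characteristic polynomial of the pentadiagonal 2-Toeplitz matrix K_n factors as det(x·I_n − K_n) = b_1^{(n+1)/2} · b_2^{(n-1)/2} · A_n(x) · B_{n+1}(x), where {A_i} and {B_i} are the associated polynomial sequences. -/
open Polynomial Matrix

namespace PentaAux

noncomputable def ent (a b c : ℂ) (i j : ℕ) : Polynomial ℂ :=
  if i = j then X - C a else if j = i + 1 then -C b else if i = j + 1 then -C c else 0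

noncomputable def triC (k : ℕ) (a b c : ℂ) : Matrix (Fin k) (Fin k) (Polynomial ℂ) :=
  Matrix.of fun i j => ent a b c i j

noncomputable def tri (k : ℕ) (a b c : ℂ) : Matrix (Fin k) (Fin k) ℂ :=
  Matrix.of fun i j =>
    if (i : ℕ) = j then a else if (j : ℕ) = (i : ℕ) + 1 then b
    else if (i : ℕ) = (j : ℕ) + 1 then c else 0

lemma val_succAbove {m : ℕ} (p : Fin (m + 1)) (i : Fin m) :
    ((p.succAbove i : Fin (m + 1)) : ℕ) = if (i : ℕ) < (p : ℕ) then (i : ℕ) else (i : ℕ) + 1 := by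
  unfold Fin.succAbove
  split_ifs with h1 h2 h2 <;> simp_all [Fin.lt_def, Fin.coe_castSucc, Fin.val_succ]

lemma charmatrix_tri (k : ℕ) (a b c : ℂ) : charmatrix (tri k a b c) = triC k a b c := by
  ext i j
  by_cases h : i = j
  · subst h
    rw [charmatrix_apply_eq]
    simp [tri, triC, ent]
  · rw [charmatrix_apply_ne _ _ _ h]
    have hv : (i : ℕ) ≠ (j : ℕ) := fun hv => h (Fin.ext hv)
    simp only [tri, triC, Matrix.of_apply, ent, if_neg hv]
    split_ifs <;> simp

lemma charpoly_tri (k : ℕ) (a b c : ℂ) :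
    (tri k a b c).charpoly = (triC k a b c).det := by
  rw [Matrix.charpoly, charmatrix_tri]

lemma triC_submatrix {k m : ℕ} (a b c : ℂ) (d : ℕ) (r s : Fin k → Fin m)
    (hr : ∀ i, ((r i : Fin m) : ℕ) = (i : ℕ) + d) (hs : ∀ j, ((s j : Fin m) : ℕ) = (j : ℕ) + d) :
    (triC m a b c).submatrix r s = triC k a b c := by
  ext i j
  simp only [submatrix_apply, triC, Matrix.of_apply, ent, hr, hs]
  split_ifs <;> first | rfl | omega

lemma det_triC_zero (a b c : ℂ) : (triC 0 a b c).det = 1 := Matrix.det_fin_zero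

lemma det_triC_one (a b c : ℂ) : (triC 1 a b c).det = X - C a := by
  rw [Matrix.det_fin_one]
  simp [triC, ent]

lemma det_triC_rec (k : ℕ) (a b c : ℂ) :
    (triC (k + 2) a b c).det =
      (X - C a) * (triC (k + 1) a b c).det - C b * C c * (triC k a b c).det := by
  have h1 : triC (k + 2) a b c 0 0 = X - C a := by simp [triC, ent]
  have h2 : triC (k + 2) a b c 0 (Fin.succ 0) = -C b := by
    simp only [triC, Matrix.of_apply, ent, Fin.val_succ, Fin.val_zero]
    norm_num
  have h3 : ∀ i : Fin k, triC (k + 2) a b c 0 i.succ.succ = 0 := by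
    intro i
    simp only [triC, Matrix.of_apply, ent, Fin.val_succ, Fin.val_zero]
    split_ifs <;> first | rfl | omega | exact False.elim (by assumption)
  have hsub1 : (triC (k + 2) a b c).submatrix Fin.succ (Fin.succAbove 0) = triC (k + 1) a b c := by
    refine triC_submatrix a b c 1 _ _ (fun i => Fin.val_succ i) (fun j => ?_)
    rw [val_succAbove]; simp
  have hexp : ((triC (k + 2) a b c).submatrix Fin.succ (Fin.succ 0).succAbove).det
      = -C c * (triC k a b c).det := by
    set M1 := (triC (k + 2) a b c).submatrix Fin.succ (Fin.succ 0).succAbove with hM1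
    have e1 : M1 0 0 = -C c := by
      rw [hM1, submatrix_apply]
      have hv : (((Fin.succ (0 : Fin (k + 1))).succAbove (0 : Fin (k + 1))) : ℕ) = 0 := by
        rw [val_succAbove]; simp
      simp only [triC, Matrix.of_apply, ent, hv, Fin.val_succ, Fin.val_zero]
      norm_num
    have e2 : ∀ i : Fin k, M1 i.succ 0 = 0 := by
      intro i
      rw [hM1, submatrix_apply]
      have hv : (((Fin.succ (0 : Fin (k + 1))).succAbove (0 : Fin (k + 1))) : ℕ) = 0 := by
        rw [val_succAbove]; simp
      simp only [triC, Matrix.of_apply, ent, hv, Fin.val_succ]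
      split_ifs <;> first | rfl | omega | exact False.elim (by assumption)
    have e3 : M1.submatrix (Fin.succAbove 0) Fin.succ = triC k a b c := by
      rw [hM1, submatrix_submatrix]
      refine triC_submatrix a b c 2 _ _ (fun i => ?_) (fun j => ?_)
      · simp only [Function.comp_apply, Fin.succAbove_zero, Fin.val_succ]
      · simp only [Function.comp_apply, val_succAbove, Fin.val_succ, Fin.val_zero]
        show (if (j : ℕ) + 1 < 0 + 1 then (j : ℕ) + 1 else (j : ℕ) + 1 + 1) = (j : ℕ) + 2
        rw [if_neg (by omega)]
    rw [Matrix.det_succ_column_zero, Fin.sum_univ_succ, e1, e3]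
    rw [Finset.sum_eq_zero (fun i _ => by rw [e2 i]; ring)]
    simp
  rw [Matrix.det_succ_row_zero, Fin.sum_univ_succ, Fin.sum_univ_succ, h1, h2, hsub1, hexp]
  rw [Finset.sum_eq_zero (fun i _ => by rw [h3 i]; ring)]
  simp only [Fin.val_zero, pow_zero, one_mul, Fin.val_succ, pow_succ, add_zero]
  ring

def splitEquiv (t : ℕ) : (Fin (t + 1) ⊕ Fin t) ≃ Fin (2 * t + 1) where
  toFun := Sum.elim (fun j => ⟨2 * j.val, by omega⟩) (fun j => ⟨2 * j.val + 1, by omega⟩)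
  invFun i := if h : i.val % 2 = 0 then Sum.inl ⟨i.val / 2, by omega⟩
    else Sum.inr ⟨i.val / 2, by omega⟩
  left_inv := by
    rintro (j | j)
    · simp only [Sum.elim_inl]
      show (if h : 2 * j.val % 2 = 0 then (Sum.inl ⟨2 * j.val / 2, by omega⟩ : Fin (t + 1) ⊕ Fin t)
        else Sum.inr ⟨2 * j.val / 2, by omega⟩) = Sum.inl j
      rw [dif_pos (by omega)]
      exact congrArg Sum.inl (Fin.ext (by simp only [Fin.val_mk]; omega))
    · simp only [Sum.elim_inr]
      show (if h : (2 * j.val + 1) % 2 = 0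
        then (Sum.inl ⟨(2 * j.val + 1) / 2, by omega⟩ : Fin (t + 1) ⊕ Fin t)
        else Sum.inr ⟨(2 * j.val + 1) / 2, by omega⟩) = Sum.inr j
      rw [dif_neg (by omega)]
      exact congrArg Sum.inr (Fin.ext (by simp only [Fin.val_mk]; omega))
  right_inv := by
    intro i
    by_cases h : i.val % 2 = 0
    · simp only [dif_pos h, Sum.elim_inl]
      exact Fin.ext (by simp only [Fin.val_mk]; omega)
    · simp only [dif_neg h, Sum.elim_inr]
      exact Fin.ext (by simp only [Fin.val_mk]; omega)

lemma splitEquiv_symm_apply (t : ℕ) (i : Fin (2 * t + 1)) :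
    (splitEquiv t).symm i = if h : i.val % 2 = 0 then Sum.inl ⟨i.val / 2, by omega⟩
      else Sum.inr ⟨i.val / 2, by omega⟩ := rfl

lemma pentaK_eq (t : ℕ) (a1 a2 b1 b2 c1 c2 : ℂ) :
    pentaK (2 * t + 1) a1 a2 b1 b2 c1 c2 =
      (Matrix.reindex (splitEquiv t) (splitEquiv t))
        (Matrix.fromBlocks (tri (t + 1) a1 b1 c1) 0 0 (tri t a2 b2 c2)) := by
  ext i j
  rw [reindex_apply, submatrix_apply]
  by_cases hi : i.val % 2 = 0 <;> by_cases hj : j.val % 2 = 0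
  · rw [splitEquiv_symm_apply, splitEquiv_symm_apply, dif_pos hi, dif_pos hj,
      fromBlocks_apply₁₁]
    simp only [pentaK, tri, Matrix.of_apply]
    split_ifs <;> first | rfl | omega
  · rw [splitEquiv_symm_apply, splitEquiv_symm_apply, dif_pos hi, dif_neg hj,
      fromBlocks_apply₁₂]
    simp only [pentaK, Matrix.of_apply, Matrix.zero_apply]
    split_ifs <;> first | rfl | omega
  · rw [splitEquiv_symm_apply, splitEquiv_symm_apply, dif_neg hi, dif_pos hj,
      fromBlocks_apply₂₁]
    simp only [pentaK, Matrix.of_apply, Matrix.zero_apply]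
    split_ifs <;> first | rfl | omega
  · rw [splitEquiv_symm_apply, splitEquiv_symm_apply, dif_neg hi, dif_neg hj,
      fromBlocks_apply₂₂]
    simp only [pentaK, tri, Matrix.of_apply]
    split_ifs <;> first | rfl | omega

end PentaAux

open PentaAux in
theorem stmt7 (a1 a2 b1 b2 c1 c2 : ℂ) (hb1 : b1 ≠ 0) (hb2 : b2 ≠ 0) (hc1 : c1 ≠ 0) (hc2 : c2 ≠ 0)
    (t : ℕ) (ht : 1 ≤ t) (n : ℕ) (hn : n = 2 * t + 1)
    (A B : ℕ → Polynomial ℂ)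
    (A0 : A 0 = 0) (A1 : A 1 = 1)
    (hAr0 : Polynomial.X * A 0 = Polynomial.C a1 * A 0 + Polynomial.C b1 * A 2)
    (hAr1 : Polynomial.X * A 1 = Polynomial.C a2 * A 1 + Polynomial.C b2 * A 3)
    (hAodd : ∀ i, 3 ≤ i → Odd i →
      Polynomial.X * A (i - 1) =
        Polynomial.C c1 * A (i - 3) + Polynomial.C a1 * A (i - 1) + Polynomial.C b1 * A (i + 1))
    (hAeven : ∀ i, 3 ≤ i → Even i →
      Polynomial.X * A (i - 1) =
        Polynomial.C c2 * A (i - 3) + Polynomial.C a2 * A (i - 1) + Polynomial.C b2 * A (i + 1))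
    (B0 : B 0 = 1) (B1 : B 1 = 0)
    (hBr0 : Polynomial.X * B 0 = Polynomial.C a1 * B 0 + Polynomial.C b1 * B 2)
    (hBr1 : Polynomial.X * B 1 = Polynomial.C a2 * B 1 + Polynomial.C b2 * B 3)
    (hBodd : ∀ i, 3 ≤ i → Odd i →
      Polynomial.X * B (i - 1) =
        Polynomial.C c1 * B (i - 3) + Polynomial.C a1 * B (i - 1) + Polynomial.C b1 * B (i + 1))
    (hBeven : ∀ i, 3 ≤ i → Even i →
      Polynomial.X * B (i - 1) =
        Polynomial.C c2 * B (i - 3) + Polynomial.C a2 * B (i - 1) + Polynomial.C b2 * B (i + 1)) :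
    (pentaK n a1 a2 b1 b2 c1 c2).charpoly =
      Polynomial.C (b1 ^ (t + 1) * b2 ^ t) * A n * B (n + 1) := by
  subst hn
  -- the odd-index subsequence of A vs the (a2,b2,c2) tridiagonal determinants
  have keyA : ∀ k : ℕ, (triC k a2 b2 c2).det = C b2 ^ k * A (2 * k + 1) ∧
      (triC (k + 1) a2 b2 c2).det = C b2 ^ (k + 1) * A (2 * (k + 1) + 1) := by
    intro k
    induction k with
    | zero =>
      constructor
      · rw [det_triC_zero]
        norm_num [A1]
      · show (triC 1 a2 b2 c2).det = C b2 ^ 1 * A 3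
        rw [det_triC_one]
        rw [A1] at hAr1
        linear_combination hAr1
    | succ k ih =>
      refine ⟨ih.2, ?_⟩
      have hrec := hAeven (2 * k + 4) (by omega) ⟨k + 2, by omega⟩
      rw [show 2 * k + 4 - 1 = 2 * k + 3 from by omega,
        show 2 * k + 4 - 3 = 2 * k + 1 from by omega,
        show 2 * k + 4 + 1 = 2 * k + 5 from by omega] at hrec
      have h1 := ih.1
      have h2 := ih.2
      rw [show 2 * (k + 1) + 1 = 2 * k + 3 from by omega] at h2
      rw [show k + 1 + 1 = k + 2 from rfl, det_triC_rec, h1, h2,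
        show 2 * (k + 2) + 1 = 2 * k + 5 from by omega]
      linear_combination (C b2 ^ (k + 1)) * hrec
  -- the even-index subsequence of B vs the (a1,b1,c1) tridiagonal determinants
  have keyB : ∀ k : ℕ, (triC k a1 b1 c1).det = C b1 ^ k * B (2 * k) ∧
      (triC (k + 1) a1 b1 c1).det = C b1 ^ (k + 1) * B (2 * (k + 1)) := by
    intro k
    induction k with
    | zero =>
      constructor
      · rw [det_triC_zero]
        norm_num [B0]
      · show (triC 1 a1 b1 c1).det = C b1 ^ 1 * B 2
        rw [det_triC_one]
        rw [B0] at hBr0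
        linear_combination hBr0
    | succ k ih =>
      refine ⟨ih.2, ?_⟩
      have hrec := hBodd (2 * k + 3) (by omega) ⟨k + 1, by omega⟩
      rw [show 2 * k + 3 - 1 = 2 * k + 2 from by omega,
        show 2 * k + 3 - 3 = 2 * k from by omega,
        show 2 * k + 3 + 1 = 2 * k + 4 from by omega] at hrec
      have h1 := ih.1
      have h2 := ih.2
      rw [show 2 * (k + 1) = 2 * k + 2 from by omega] at h2
      rw [show k + 1 + 1 = k + 2 from rfl, det_triC_rec, h1, h2,
        show 2 * (k + 2) = 2 * k + 4 from by omega]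
      linear_combination (C b1 ^ (k + 1)) * hrec
  rw [pentaK_eq, Matrix.charpoly_reindex, Matrix.charpoly_fromBlocks_zero₂₁,
    charpoly_tri, charpoly_tri, (keyA t).1, (keyB (t + 1)).1]
  rw [show 2 * (t + 1) = 2 * t + 1 + 1 from by omega]
  rw [C_mul, ← C_pow, ← C_pow]
  ring
end

section
/- For n even, b_2^{n/2} · A_{n+1}(x) = (b_2·c_2)^{n/4} · U_{n/2}((x − a_2)/(2·√(b_2·c_2))), where U_m denotes the m-th Chebyshev polynomial of the second kind and A_{n+1} is the associated recurrence polynomial. (Here √(b_2·c_2) is a fixed square root of b_2·c_2, and the identity holds as polynomials in x.) -/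
open Polynomial Matrix

theorem stmt8 (a1 a2 b1 b2 c1 c2 : ℂ) (hb1 : b1 ≠ 0) (hb2 : b2 ≠ 0) (hc1 : c1 ≠ 0) (hc2 : c2 ≠ 0)
    (t : ℕ) (n : ℕ) (hn : n = 2 * t)
    (s : ℂ) (hs : s ^ 2 = b2 * c2)
    (A : ℕ → Polynomial ℂ)
    (A0 : A 0 = 0) (A1 : A 1 = 1)
    (hAr0 : Polynomial.X * A 0 = Polynomial.C a1 * A 0 + Polynomial.C b1 * A 2)
    (hAr1 : Polynomial.X * A 1 = Polynomial.C a2 * A 1 + Polynomial.C b2 * A 3)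
    (hAodd : ∀ i, 3 ≤ i → Odd i →
      Polynomial.X * A (i - 1) =
        Polynomial.C c1 * A (i - 3) + Polynomial.C a1 * A (i - 1) + Polynomial.C b1 * A (i + 1))
    (hAeven : ∀ i, 3 ≤ i → Even i →
      Polynomial.X * A (i - 1) =
        Polynomial.C c2 * A (i - 3) + Polynomial.C a2 * A (i - 1) + Polynomial.C b2 * A (i + 1)) :
    Polynomial.C (b2 ^ t) * A (n + 1) =
      Polynomial.C (s ^ t) *
        (Polynomial.Chebyshev.U ℂ (t : ℤ)).comp
          (Polynomial.C (2 * s)⁻¹ * (Polynomial.X - Polynomial.C a2)) := by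
  subst hn
  have hsne : s ≠ 0 := by
    intro h
    apply hb2
    have : (0:ℂ) = b2 * c2 := by simpa [h] using hs
    rcases mul_eq_zero.mp this.symm with h' | h'
    · exact h'
    · exact absurd h' hc2
  set q : Polynomial ℂ := Polynomial.C (2 * s)⁻¹ * (Polynomial.X - Polynomial.C a2) with hq
  have hinvP : 2 * Polynomial.C (2 * s)⁻¹ * Polynomial.C s = (1 : Polynomial ℂ) := by
    rw [show (2 : Polynomial ℂ) = Polynomial.C 2 from (map_ofNat Polynomial.C 2).symm, ← Polynomial.C_mul,
      ← Polynomial.C_mul, show (2 : ℂ) * (2 * s)⁻¹ * s = 1 by field_simp, Polynomial.C_1]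
  have hsP : Polynomial.C b2 * Polynomial.C c2 = Polynomial.C s ^ 2 := by
    rw [← Polynomial.C_mul, ← hs, ← Polynomial.C_pow]
  have key : ∀ m : ℕ,
      Polynomial.C b2 ^ m * A (2 * m + 1) =
        Polynomial.C s ^ m * (Polynomial.Chebyshev.U ℂ (m : ℤ)).comp q ∧
      Polynomial.C b2 ^ (m + 1) * A (2 * (m + 1) + 1) =
        Polynomial.C s ^ (m + 1) * (Polynomial.Chebyshev.U ℂ ((m : ℤ) + 1)).comp q := by
    intro m
    induction m with
    | zero =>
      constructor
      · simp [A1, Polynomial.Chebyshev.U_zero]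
      · have h3 : Polynomial.C b2 * A 3 = Polynomial.X - Polynomial.C a2 := by
          rw [A1, mul_one] at hAr1
          linear_combination -hAr1
        have e : ((0 : ℕ) : ℤ) + 1 = 1 := by simp
        rw [e, Polynomial.Chebyshev.U_one, hq]
        simp only [Polynomial.mul_comp, Polynomial.X_comp, Polynomial.ofNat_comp]
        linear_combination h3 + (-(Polynomial.X - Polynomial.C a2)) * hinvP
    | succ m ih =>
      obtain ⟨h1, h2⟩ := ih
      refine ⟨by push_cast; exact h2, ?_⟩
      have hrec := hAeven (2 * m + 4) (by omega) ⟨m + 2, by ring⟩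
      have e1 : 2 * m + 4 - 1 = 2 * (m + 1) + 1 := by omega
      have e2 : 2 * m + 4 - 3 = 2 * m + 1 := by omega
      have e3 : 2 * m + 4 + 1 = 2 * (m + 2) + 1 := by omega
      rw [e1, e2, e3] at hrec
      have hU : Polynomial.Chebyshev.U ℂ (((m : ℤ) + 1) + 1) =
          2 * Polynomial.X * Polynomial.Chebyshev.U ℂ ((m : ℤ) + 1) -
            Polynomial.Chebyshev.U ℂ (m : ℤ) := by
        have := Polynomial.Chebyshev.U_add_two ℂ (m : ℤ)
        convert this using 2 <;> push_cast <;> ring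
      have hcast : ((m : ℤ) + 1 + 1) = (((m + 1 : ℕ) : ℤ) + 1) := by push_cast; ring
      rw [← hcast, hU]
      simp only [Polynomial.sub_comp, Polynomial.mul_comp, Polynomial.X_comp,
        Polynomial.ofNat_comp]
      have step : Polynomial.C b2 ^ (m + 2) * A (2 * (m + 2) + 1) =
          (Polynomial.X - Polynomial.C a2) *
            (Polynomial.C s ^ (m + 1) * (Polynomial.Chebyshev.U ℂ ((m : ℤ) + 1)).comp q) -
          Polynomial.C s ^ 2 * (Polynomial.C s ^ m * (Polynomial.Chebyshev.U ℂ (m : ℤ)).comp q) := by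
        rw [← h1, ← h2]
        linear_combination (-(Polynomial.C b2 ^ (m + 1))) * hrec +
          (-(Polynomial.C b2 ^ m * A (2 * m + 1))) * hsP
      rw [show m + 1 + 1 = m + 2 from rfl, step, hq]
      linear_combination (-(Polynomial.X - Polynomial.C a2) * Polynomial.C s ^ (m + 1) *
        (Polynomial.Chebyshev.U ℂ ((m : ℤ) + 1)).comp
          (Polynomial.C (2 * s)⁻¹ * (Polynomial.X - Polynomial.C a2))) * hinvP
  have := (key t).1
  rw [← map_pow, ← map_pow] at this
  exact this
end

section
/- For n even, b_1^{n/2} · B_n(x) = (b_1·c_1)^{n/4} · U_{n/2}((x − a_1)/(2·√(b_1·c_1))), where U_m is the m-th Chebyshev polynomial of the second kind and B_n is the associated recurrence polynomial. (Here √(b_1·c_1) is a fixed square root of b_1·c_1, and the identity holds as polynomials in x.) -/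
open Polynomial Matrix

theorem stmt9 (a1 a2 b1 b2 c1 c2 : ℂ) (hb1 : b1 ≠ 0) (hb2 : b2 ≠ 0) (hc1 : c1 ≠ 0) (hc2 : c2 ≠ 0)
    (t : ℕ) (n : ℕ) (hn : n = 2 * t)
    (s : ℂ) (hs : s ^ 2 = b1 * c1)
    (B : ℕ → Polynomial ℂ)
    (B0 : B 0 = 1) (B1 : B 1 = 0)
    (hBr0 : Polynomial.X * B 0 = Polynomial.C a1 * B 0 + Polynomial.C b1 * B 2)
    (hBr1 : Polynomial.X * B 1 = Polynomial.C a2 * B 1 + Polynomial.C b2 * B 3)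
    (hBodd : ∀ i, 3 ≤ i → Odd i →
      Polynomial.X * B (i - 1) =
        Polynomial.C c1 * B (i - 3) + Polynomial.C a1 * B (i - 1) + Polynomial.C b1 * B (i + 1))
    (hBeven : ∀ i, 3 ≤ i → Even i →
      Polynomial.X * B (i - 1) =
        Polynomial.C c2 * B (i - 3) + Polynomial.C a2 * B (i - 1) + Polynomial.C b2 * B (i + 1)) :
    Polynomial.C (b1 ^ t) * B n =
      Polynomial.C (s ^ t) *
        (Polynomial.Chebyshev.U ℂ (t : ℤ)).comp
          (Polynomial.C (2 * s)⁻¹ * (Polynomial.X - Polynomial.C a1)) := by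
  obtain ⟨p, hpd⟩ : ∃ p : Polynomial ℂ,
      p = Polynomial.C (2 * s)⁻¹ * (Polynomial.X - Polynomial.C a1) := ⟨_, rfl⟩
  rw [← hpd]
  have hs0 : s ≠ 0 := by
    intro h
    apply mul_ne_zero hb1 hc1
    rw [← hs, h]; ring
  have h2s : (2 : ℂ) * s ≠ 0 := mul_ne_zero two_ne_zero hs0
  have hp2 : 2 * Polynomial.C s * p = Polynomial.X - Polynomial.C a1 := by
    rw [hpd, ← mul_assoc]
    have : (2 : Polynomial ℂ) * Polynomial.C s * Polynomial.C (2 * s)⁻¹ = 1 := by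
      rw [show (2 : Polynomial ℂ) = Polynomial.C 2 from (map_ofNat _ 2).symm,
        ← Polynomial.C_mul, ← Polynomial.C_mul, ← Polynomial.C_1]
      congr 1
      field_simp
    rw [this, one_mul]
  have hss : Polynomial.C s * Polynomial.C s = Polynomial.C b1 * Polynomial.C c1 := by
    rw [← Polynomial.C_mul, ← Polynomial.C_mul]
    congr 1
    rw [← hs]; ring
  have key : ∀ m : ℕ, (Polynomial.C b1) ^ m * B (2 * m) =
      (Polynomial.C s) ^ m * (Polynomial.Chebyshev.U ℂ (m : ℤ)).comp p := by
    intro m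
    induction m using Nat.twoStepInduction with
    | zero => simp [B0, Polynomial.Chebyshev.U_zero]
    | one =>
      have h2 : Polynomial.C b1 * B 2 = Polynomial.X - Polynomial.C a1 := by
        have h := hBr0
        rw [B0, mul_one, mul_one] at h
        linear_combination -h
      have hU1 : (Polynomial.Chebyshev.U ℂ ((1 : ℕ) : ℤ)).comp p = 2 * p := by
        norm_num [Polynomial.Chebyshev.U_one]
      rw [hU1]
      linear_combination h2 - hp2
    | more m IH0 IH1 =>
      have h : Polynomial.X * B (2 * m + 2) =
          Polynomial.C c1 * B (2 * m) + Polynomial.C a1 * B (2 * m + 2) +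
            Polynomial.C b1 * B (2 * m + 4) := by
        have := hBodd (2 * m + 3) (by omega) ⟨m + 1, by ring⟩
        simpa [show 2 * m + 3 - 1 = 2 * m + 2 from rfl, show 2 * m + 3 - 3 = 2 * m from rfl,
          show 2 * m + 3 + 1 = 2 * m + 4 from rfl] using this
      have hUc : (Polynomial.Chebyshev.U ℂ ((m : ℤ) + 2)).comp p =
          2 * p * (Polynomial.Chebyshev.U ℂ ((m : ℤ) + 1)).comp p -
            (Polynomial.Chebyshev.U ℂ (m : ℤ)).comp p := by
        rw [Polynomial.Chebyshev.U_add_two]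
        simp [Polynomial.sub_comp, Polynomial.mul_comp]
      have hcast2 : ((m + 2 : ℕ) : ℤ) = (m : ℤ) + 2 := by push_cast; ring
      have hcast1 : ((m + 1 : ℕ) : ℤ) = (m : ℤ) + 1 := by push_cast; ring
      rw [hcast1, show 2 * (m + 1) = 2 * m + 2 from by ring] at IH1
      rw [show 2 * (m + 2) = 2 * m + 4 from by ring, hcast2]
      linear_combination (-(Polynomial.C b1) ^ (m + 1)) * h
        + (Polynomial.X - Polynomial.C a1) * IH1
        + (-(Polynomial.C c1 * Polynomial.C b1)) * IH0
        + (-(Polynomial.C s) ^ (m + 1) * (Polynomial.Chebyshev.U ℂ ((m : ℤ) + 1)).comp p) * hp2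
        + ((Polynomial.C s) ^ m * (Polynomial.Chebyshev.U ℂ (m : ℤ)).comp p) * hss
        + (-(Polynomial.C s) ^ (m + 2)) * hUc
  rw [hn]
  simpa [map_pow] using key t
end

section
/- For n even, the characteristic polynomial of the pentadiagonal 2-Toeplitz matrix K_n equals (b_1·c_1·b_2·c_2)^{n/4} · U_{n/2}((x−a_1)/(2√(b_1c_1))) · U_{n/2}((x−a_2)/(2√(b_2c_2))), where U_m is the Chebyshev polynomial of the second kind. Consequently, the n eigenvalues of K_n are a_1 − 2√(b_1c_1)·cos((k+1)π/(n+2)) for odd indices k and a_2 − 2√(b_2c_2)·cos(kπ/(n+2)) for even indices k, with 1 ≤ k ≤ n. -/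
open Polynomial Matrix

noncomputable def tridM (R : Type*) [CommRing R] (t : ℕ) (a b c : R) :
    Matrix (Fin t) (Fin t) R :=
  Matrix.of fun i j =>
    if (i : ℕ) = j then a else if (j : ℕ) = (i : ℕ) + 1 then b
    else if (i : ℕ) = (j : ℕ) + 1 then c else 0

variable {R : Type*} [CommRing R]

lemma tridM_apply (t : ℕ) (a b c : R) (i j : Fin t) :
    tridM R t a b c i j =
      if (i : ℕ) = j then a else if (j : ℕ) = (i : ℕ) + 1 then b
      else if (i : ℕ) = (j : ℕ) + 1 then c else 0 := rfl

lemma det_tridM_rec (m : ℕ) (a b c : R) :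
    (tridM R (m+2) a b c).det
      = a * (tridM R (m+1) a b c).det - b * c * (tridM R m a b c).det := by
  set A := tridM R (m+2) a b c with hA
  rw [det_succ_row A (Fin.last (m+1)), Fin.sum_univ_castSucc, Fin.sum_univ_castSucc]
  have h0 : ∀ j : Fin m,
      (-1:R) ^ ((Fin.last (m+1) : ℕ) + ((j.castSucc.castSucc : Fin (m+2)) : ℕ)) *
        A (Fin.last (m+1)) j.castSucc.castSucc *
        (A.submatrix (Fin.last (m+1)).succAbove (j.castSucc.castSucc).succAbove).det = 0 := by
    intro j
    have hj := j.isLt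
    have : A (Fin.last (m+1)) j.castSucc.castSucc = 0 := by
      show (if (m+1 : ℕ) = (j:ℕ) then a else if (j:ℕ) = (m+1)+1 then b
        else if (m+1 : ℕ) = (j:ℕ)+1 then c else 0) = 0
      split_ifs <;> first | rfl | omega
    rw [this]; ring
  rw [Finset.sum_eq_zero (fun j _ => h0 j), zero_add]
  have hrow : ∀ i : Fin (m+1), (((Fin.last (m+1)).succAbove i : Fin (m+2)) : ℕ) = (i : ℕ) := by
    intro i; rw [Fin.succAbove_last]; rfl
  have hcol : ∀ j : Fin (m+1),
      (((Fin.castSucc (Fin.last m)).succAbove j : Fin (m+2)) : ℕ)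
        = if (j : ℕ) < m then (j : ℕ) else (j : ℕ) + 1 := by
    intro j
    unfold Fin.succAbove
    split_ifs with h h2 h3 <;> simp_all [Fin.lt_def]
  -- entry values
  have e1 : A (Fin.last (m+1)) (Fin.castSucc (Fin.last m)) = c := by
    show (if (m+1:ℕ) = (m:ℕ) then a else if (m:ℕ) = (m+1)+1 then b
      else if (m+1:ℕ) = (m:ℕ)+1 then c else 0) = c
    split_ifs <;> first | rfl | omega
  have e2 : A (Fin.last (m+1)) (Fin.last (m+1)) = a := by
    show (if (m+1:ℕ) = (m+1:ℕ) then a else if (m+1:ℕ) = (m+1)+1 then b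
      else if (m+1:ℕ) = (m+1:ℕ)+1 then c else 0) = a
    split_ifs <;> first | rfl | omega
  -- the submatrix for the last column is tridM (m+1)
  have hS2 : A.submatrix (Fin.last (m+1)).succAbove (Fin.last (m+1)).succAbove
      = tridM R (m+1) a b c := by
    rw [Fin.succAbove_last]
    ext i j
    rfl
  -- determinant of the other submatrix
  have hS1 : (A.submatrix (Fin.last (m+1)).succAbove
      (Fin.castSucc (Fin.last m)).succAbove).det = b * (tridM R m a b c).det := by
    set B := A.submatrix (Fin.last (m+1)).succAbove (Fin.castSucc (Fin.last m)).succAbove with hB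
    rw [det_succ_column B (Fin.last m), Fin.sum_univ_castSucc]
    have hz : ∀ i : Fin m,
        (-1:R) ^ (((i.castSucc : Fin (m+1)) : ℕ) + ((Fin.last m : Fin (m+1)) : ℕ)) *
          B i.castSucc (Fin.last m) *
          (B.submatrix i.castSucc.succAbove (Fin.last m).succAbove).det = 0 := by
      intro i
      have hi := i.isLt
      have : B i.castSucc (Fin.last m) = 0 := by
        rw [hB, submatrix_apply, hA, tridM_apply, hrow, hcol]
        have : ¬ ((Fin.last m : Fin (m+1)) : ℕ) < m := by simp
        rw [if_neg this]
        simp only [Fin.coe_castSucc, Fin.val_last]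
        split_ifs <;> first | rfl | omega
      rw [this]; ring
    rw [Finset.sum_eq_zero (fun i _ => hz i), zero_add]
    have eB : B (Fin.last m) (Fin.last m) = b := by
      rw [hB, submatrix_apply, hA, tridM_apply, hrow, hcol]
      have : ¬ ((Fin.last m : Fin (m+1)) : ℕ) < m := by simp
      rw [if_neg this]
      simp only [Fin.val_last]
      split_ifs <;> first | rfl | omega
    have hBsub : B.submatrix (Fin.last m).succAbove (Fin.last m).succAbove
        = tridM R m a b c := by
      rw [Fin.succAbove_last]
      ext i j
      rw [hB, submatrix_apply, submatrix_apply, hA, tridM_apply, hrow, hcol, tridM_apply]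
      have h1 : ((Fin.castSucc j : Fin (m+1)) : ℕ) < m := by
        simpa using j.isLt
      rw [if_pos h1]
      simp only [Fin.coe_castSucc]
    rw [eB, hBsub]
    have : ((Fin.last m : ℕ) + (Fin.last m : ℕ)) = 2 * m := by simp [Fin.val_last]; ring
    rw [this]
    rw [Even.neg_one_pow ⟨m, by ring⟩]
    ring
  rw [e1, e2, hS1, hS2]
  have h1 : ((Fin.last (m+1) : ℕ) + ((Fin.castSucc (Fin.last m) : Fin (m+2)) : ℕ)) = 2*m+1 := by
    simp [Fin.val_last]; ring
  have h2 : ((Fin.last (m+1) : ℕ) + ((Fin.last (m+1)) : ℕ)) = 2*(m+1) := by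
    simp [Fin.val_last]; ring
  rw [h1, h2, Odd.neg_one_pow ⟨m, by ring⟩, Even.neg_one_pow ⟨m+1, by ring⟩]
  ring

lemma charmatrix_tridM (t : ℕ) (a b c : R) :
    charmatrix (tridM R t a b c) = tridM R[X] t (X - C a) (-C b) (-C c) := by
  ext i j
  rcases eq_or_ne i j with rfl | hij
  · rw [charmatrix_apply_eq, tridM_apply, tridM_apply, if_pos rfl, if_pos rfl]
  · have hv : (i : ℕ) ≠ (j : ℕ) := fun h => hij (Fin.ext h)
    rw [charmatrix_apply_ne _ _ _ hij, tridM_apply, tridM_apply, if_neg hv, if_neg hv]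
    split_ifs <;> simp

lemma charpoly_tridM_rec (m : ℕ) (a b c : R) :
    (tridM R (m+2) a b c).charpoly
      = (X - C a) * (tridM R (m+1) a b c).charpoly
        - C (b * c) * (tridM R m a b c).charpoly := by
  have := det_tridM_rec (R := R[X]) m (X - C a) (-C b) (-C c)
  simp only [Matrix.charpoly, charmatrix_tridM]
  rw [this]
  simp only [C_mul]
  ring

lemma charpoly_tridM_cheb (a b c s : ℂ) (hs : s ≠ 0) (hbc : s ^ 2 = b * c) :
    ∀ t : ℕ, (tridM ℂ t a b c).charpoly
      = C (s ^ t) * (Polynomial.Chebyshev.U ℂ (t : ℤ)).comp (C (2*s)⁻¹ * (X - C a)) := by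
  have h2s : (C (2*s) : ℂ[X]) = 2 * C s := by rw [C_mul, map_ofNat]
  have hC : ((2 : ℂ[X]) * C s) * C ((2*s)⁻¹) = 1 := by
    rw [← h2s, ← C_mul, mul_inv_cancel₀ (mul_ne_zero two_ne_zero hs), C_1]
  have base0 : (tridM ℂ 0 a b c).charpoly
      = C (s ^ 0) * (Polynomial.Chebyshev.U ℂ ((0:ℕ) : ℤ)).comp (C (2*s)⁻¹ * (X - C a)) := by
    rw [Matrix.charpoly, det_fin_zero]
    norm_num [Polynomial.Chebyshev.U_zero]
  have base1 : (tridM ℂ 1 a b c).charpoly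
      = C (s ^ 1) * (Polynomial.Chebyshev.U ℂ ((1:ℕ) : ℤ)).comp (C (2*s)⁻¹ * (X - C a)) := by
    rw [Matrix.charpoly, det_fin_one, charmatrix_apply_eq]
    have ha : tridM ℂ 1 a b c 0 0 = a := rfl
    rw [ha, show ((1:ℕ) : ℤ) = 1 by norm_num, Polynomial.Chebyshev.U_one, pow_one]
    simp only [mul_comp, ofNat_comp, X_comp]
    linear_combination (-(X - C a)) * hC
  have step : ∀ m : ℕ,
      (tridM ℂ m a b c).charpoly
        = C (s ^ m) * (Polynomial.Chebyshev.U ℂ (m : ℤ)).comp (C (2*s)⁻¹ * (X - C a)) →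
      (tridM ℂ (m+1) a b c).charpoly
        = C (s ^ (m+1)) * (Polynomial.Chebyshev.U ℂ ((m+1 : ℕ) : ℤ)).comp (C (2*s)⁻¹ * (X - C a)) →
      (tridM ℂ (m+2) a b c).charpoly
        = C (s ^ (m+2)) * (Polynomial.Chebyshev.U ℂ ((m+2 : ℕ) : ℤ)).comp (C (2*s)⁻¹ * (X - C a)) := by
    intro m ih0 ih1
    rw [charpoly_tridM_rec, ih0, ih1]
    have hU : Polynomial.Chebyshev.U ℂ ((m+2 : ℕ) : ℤ)
        = 2 * X * Polynomial.Chebyshev.U ℂ ((m+1 : ℕ) : ℤ) - Polynomial.Chebyshev.U ℂ (m : ℤ) := by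
      push_cast
      exact Polynomial.Chebyshev.U_add_two ℂ m
    rw [hU]
    simp only [sub_comp, mul_comp, ofNat_comp, X_comp]
    rw [← hbc]
    simp only [C.map_pow]
    linear_combination (-((C s)^(m+1) * (Polynomial.Chebyshev.U ℂ ((m+1:ℕ) : ℤ)).comp
      (C (2*s)⁻¹ * (X - C a)) * (X - C a))) * hC
  intro t
  induction t using Nat.twoStepInduction with
  | zero => exact base0
  | one => exact base1
  | more m ih0 ih1 => exact step m ih0 ih1


def evenOdd (t : ℕ) : (Fin t ⊕ Fin t) ≃ Fin (2 * t) where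
  toFun x := Sum.elim (fun i => (⟨2 * i.val, by omega⟩ : Fin (2*t)))
    (fun i => (⟨2 * i.val + 1, by omega⟩ : Fin (2*t))) x
  invFun j := if h : j.val % 2 = 0 then Sum.inl ⟨j.val / 2, by omega⟩
    else Sum.inr ⟨j.val / 2, by omega⟩
  left_inv x := by
    dsimp only
    rcases x with i | i
    · simp only [Sum.elim_inl]
      refine (dif_pos (by omega : 2 * (i:ℕ) % 2 = 0)).trans ?_
      congr 1
      exact Fin.ext (by simp only [Fin.val_mk]; omega)
    · simp only [Sum.elim_inr]
      refine (dif_neg (by omega : ¬ (2 * (i:ℕ) + 1) % 2 = 0)).trans ?_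
      congr 1
      exact Fin.ext (by simp only [Fin.val_mk]; omega)
  right_inv j := by
    dsimp only
    by_cases h : j.val % 2 = 0
    · rw [dif_pos h]
      exact Fin.ext (by simp; omega)
    · rw [dif_neg h]
      exact Fin.ext (by simp; omega)

lemma evenOdd_symm_apply (t : ℕ) (j : Fin (2*t)) :
    (evenOdd t).symm j = if h : j.val % 2 = 0 then Sum.inl ⟨j.val / 2, by omega⟩
      else Sum.inr ⟨j.val / 2, by omega⟩ := rfl

lemma pentaK_eq_blocks (t : ℕ) (a1 a2 b1 b2 c1 c2 : ℂ) :
    pentaK (2*t) a1 a2 b1 b2 c1 c2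
      = (Matrix.fromBlocks (tridM ℂ t a1 b1 c1) 0 0 (tridM ℂ t a2 b2 c2)).submatrix
          (evenOdd t).symm (evenOdd t).symm := by
  ext i j
  rw [submatrix_apply, evenOdd_symm_apply, evenOdd_symm_apply]
  by_cases hi : i.val % 2 = 0 <;> by_cases hj : j.val % 2 = 0
  · rw [dif_pos hi, dif_pos hj]
    simp only [fromBlocks_apply₁₁, tridM_apply, pentaK, Matrix.of_apply]
    split_ifs <;> first | rfl | omega
  · rw [dif_pos hi, dif_neg hj]
    simp only [fromBlocks_apply₁₂, Matrix.zero_apply, pentaK, Matrix.of_apply]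
    split_ifs <;> first | rfl | omega
  · rw [dif_neg hi, dif_pos hj]
    simp only [fromBlocks_apply₂₁, Matrix.zero_apply, pentaK, Matrix.of_apply]
    split_ifs <;> first | rfl | omega
  · rw [dif_neg hi, dif_neg hj]
    simp only [fromBlocks_apply₂₂, tridM_apply, pentaK, Matrix.of_apply]
    split_ifs <;> first | rfl | omega

lemma charpoly_pentaK' (t : ℕ) (a1 a2 b1 b2 c1 c2 : ℂ) :
    (pentaK (2*t) a1 a2 b1 b2 c1 c2).charpoly
      = (tridM ℂ t a1 b1 c1).charpoly * (tridM ℂ t a2 b2 c2).charpoly := by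
  rw [pentaK_eq_blocks, ← Matrix.reindex_apply, Matrix.charpoly_reindex,
    Matrix.charpoly_fromBlocks_zero₂₁]

lemma hasEigenvalue_of_isRoot_charpoly {N : ℕ} (M : Matrix (Fin N) (Fin N) ℂ) (μ : ℂ)
    (h : M.charpoly.IsRoot μ) :
    Module.End.HasEigenvalue (Matrix.toLin' M) μ := by
  have h2 : M.charpoly.eval μ = (Matrix.scalar (Fin N) μ - M).det := by
    rw [Matrix.charpoly, eval_det, matPolyEquiv_charmatrix]
    simp
  have hdet : (Matrix.scalar (Fin N) μ - M).det = 0 := by rw [← h2]; exact h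
  obtain ⟨v, hv0, hv⟩ := (Matrix.exists_mulVec_eq_zero_iff).2 hdet
  have hMv : M.mulVec v = μ • v := by
    have := hv
    rw [Matrix.sub_mulVec, sub_eq_zero] at this
    rw [← this, Matrix.scalar_apply]
    ext i
    simp [Matrix.mulVec_diagonal]
  exact Module.End.hasEigenvalue_of_hasEigenvector
    ⟨Module.End.mem_eigenspace_iff.2 (by rw [Matrix.toLin'_apply, hMv]), hv0⟩

lemma U_eval_neg_cos (t j : ℕ) (h1 : 1 ≤ j) (h2 : j ≤ t) :
    (Polynomial.Chebyshev.U ℂ (t : ℤ)).eval (-((Real.cos (j * Real.pi / (t+1)) : ℝ) : ℂ)) = 0 := by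
  set θ : ℝ := j * Real.pi / (t+1) with hθ
  have hcos : (-((Real.cos θ : ℝ) : ℂ)) = Complex.cos ((Real.pi : ℂ) - (θ : ℂ)) := by
    rw [Complex.cos_pi_sub, Complex.ofReal_cos]
  have key := Polynomial.Chebyshev.U_complex_cos ((Real.pi : ℂ) - (θ : ℂ)) (t : ℤ)
  have hsin_ne : Complex.sin ((Real.pi : ℂ) - (θ : ℂ)) ≠ 0 := by
    rw [Complex.sin_pi_sub, ← Complex.ofReal_sin]
    rw [Complex.ofReal_ne_zero]
    have hπ := Real.pi_pos
    have hj : (0:ℝ) < (j:ℝ) := by exact_mod_cast h1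
    have hθpos : 0 < θ := by
      rw [hθ]; positivity
    have hθlt : θ < Real.pi := by
      rw [hθ, div_lt_iff₀ (by positivity)]
      have : (j:ℝ) < (t:ℝ)+1 := by exact_mod_cast Nat.lt_succ_of_le h2
      nlinarith
    exact ne_of_gt (Real.sin_pos_of_pos_of_lt_pi hθpos hθlt)
  have hmul : (((t:ℤ):ℂ) + 1) * ((Real.pi : ℂ) - (θ : ℂ)) = ((t + 1 - j : ℤ) : ℂ) * (Real.pi : ℂ) := by
    have hne : ((t:ℂ)+1) ≠ 0 := Nat.cast_add_one_ne_zero t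
    rw [hθ]
    push_cast
    field_simp
  rw [hmul, Complex.sin_int_mul_pi] at key
  rw [hcos]
  exact (mul_eq_zero.1 key).resolve_right hsin_ne

theorem stmt10 (a1 a2 b1 b2 c1 c2 : ℂ) (hb1 : b1 ≠ 0) (hb2 : b2 ≠ 0) (hc1 : c1 ≠ 0) (hc2 : c2 ≠ 0)
    (t : ℕ) (ht : 1 ≤ t) (n : ℕ) (hn : n = 2 * t)
    (s1 s2 : ℂ) (hs1 : s1 ^ 2 = b1 * c1) (hs2 : s2 ^ 2 = b2 * c2) :
    (pentaK n a1 a2 b1 b2 c1 c2).charpoly =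
      Polynomial.C ((s1 * s2) ^ t) *
        (Polynomial.Chebyshev.U ℂ (t : ℤ)).comp
          (Polynomial.C (2 * s1)⁻¹ * (Polynomial.X - Polynomial.C a1)) *
        (Polynomial.Chebyshev.U ℂ (t : ℤ)).comp
          (Polynomial.C (2 * s2)⁻¹ * (Polynomial.X - Polynomial.C a2)) ∧
    (∀ k : ℕ, 1 ≤ k → k ≤ n → Odd k →
      Module.End.HasEigenvalue (Matrix.toLin' (pentaK n a1 a2 b1 b2 c1 c2))
        (a1 - 2 * s1 * (Real.cos ((k + 1) * Real.pi / (n + 2)) : ℂ))) ∧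
    (∀ k : ℕ, 1 ≤ k → k ≤ n → Even k →
      Module.End.HasEigenvalue (Matrix.toLin' (pentaK n a1 a2 b1 b2 c1 c2))
        (a2 - 2 * s2 * (Real.cos (k * Real.pi / (n + 2)) : ℂ))) := by
  have hs1ne : s1 ≠ 0 := by
    intro h
    exact (mul_ne_zero hb1 hc1) (by rw [← hs1, h]; ring)
  have hs2ne : s2 ≠ 0 := by
    intro h
    exact (mul_ne_zero hb2 hc2) (by rw [← hs2, h]; ring)
  subst hn
  have hcp : (pentaK (2*t) a1 a2 b1 b2 c1 c2).charpoly =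
      Polynomial.C ((s1 * s2) ^ t) *
        (Polynomial.Chebyshev.U ℂ (t : ℤ)).comp (C (2 * s1)⁻¹ * (X - C a1)) *
        (Polynomial.Chebyshev.U ℂ (t : ℤ)).comp (C (2 * s2)⁻¹ * (X - C a2)) := by
    rw [charpoly_pentaK', charpoly_tridM_cheb a1 b1 c1 s1 hs1ne hs1,
        charpoly_tridM_cheb a2 b2 c2 s2 hs2ne hs2, mul_pow, C_mul]
    ring
  refine ⟨hcp, ?_, ?_⟩
  · intro k hk1 hk2 hkodd
    obtain ⟨m, rfl⟩ := hkodd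
    apply hasEigenvalue_of_isRoot_charpoly
    rw [Polynomial.IsRoot, hcp]
    have hang : (((2*m+1 : ℕ) : ℝ) + 1) * Real.pi / (((2*t : ℕ) : ℝ) + 2)
        = ((m+1 : ℕ) : ℝ) * Real.pi / ((t : ℝ) + 1) := by
      push_cast
      rw [div_eq_div_iff (by positivity) (by positivity)]
      ring
    rw [hang]
    simp only [eval_mul, eval_comp, eval_C, eval_sub, eval_X]
    have hpt : (2*s1)⁻¹ * ((a1 - 2*s1*((Real.cos (((m+1 : ℕ) : ℝ) * Real.pi / ((t:ℝ)+1)) : ℝ) : ℂ)) - a1)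
        = -((Real.cos (((m+1 : ℕ) : ℝ) * Real.pi / ((t:ℝ)+1)) : ℝ) : ℂ) := by
      field_simp
      ring
    rw [hpt, U_eval_neg_cos t (m+1) (by omega) (by omega)]
    ring
  · intro k hk1 hk2 hkeven
    obtain ⟨m, rfl⟩ := hkeven
    apply hasEigenvalue_of_isRoot_charpoly
    rw [Polynomial.IsRoot, hcp]
    have hang : ((m+m : ℕ) : ℝ) * Real.pi / (((2*t : ℕ) : ℝ) + 2)
        = ((m : ℕ) : ℝ) * Real.pi / ((t : ℝ) + 1) := by
      push_cast
      rw [div_eq_div_iff (by positivity) (by positivity)]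
      ring
    rw [hang]
    simp only [eval_mul, eval_comp, eval_C, eval_sub, eval_X]
    have hpt : (2*s2)⁻¹ * ((a2 - 2*s2*((Real.cos (((m : ℕ) : ℝ) * Real.pi / ((t:ℝ)+1)) : ℝ) : ℂ)) - a2)
        = -((Real.cos (((m : ℕ) : ℝ) * Real.pi / ((t:ℝ)+1)) : ℝ) : ℂ) := by
      field_simp
      ring
    rw [hpt, U_eval_neg_cos t m (by omega) (by omega)]
    ring
end

section
/- For n even and α an eigenvalue of the pentadiagonal 2-Toeplitz matrix K_n of the form α = a_1 − 2√(b_1c_1)·cos((j+1)π/(n+2)) with j odd (a zero of B_n), the vector (B_0(α), B_1(α), …, B_{n−1}(α))ᵀ is an eigenvector of K_n associated with α, where {B_i} is the associated polynomial sequence. In particular this vector is nonzero since B_0(α)=1. -/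
open Polynomial Matrix

theorem stmt12 (a1 a2 b1 b2 c1 c2 : ℂ) (hb1 : b1 ≠ 0) (hb2 : b2 ≠ 0) (hc1 : c1 ≠ 0) (hc2 : c2 ≠ 0)
    (t : ℕ) (ht : 1 ≤ t) (n : ℕ) (hn : n = 2 * t)
    (s1 : ℂ) (hs1 : s1 ^ 2 = b1 * c1)
    (B : ℕ → Polynomial ℂ)
    (B0 : B 0 = 1) (B1 : B 1 = 0)
    (hBr0 : Polynomial.X * B 0 = Polynomial.C a1 * B 0 + Polynomial.C b1 * B 2)
    (hBr1 : Polynomial.X * B 1 = Polynomial.C a2 * B 1 + Polynomial.C b2 * B 3)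
    (hBodd : ∀ i, 3 ≤ i → Odd i →
      Polynomial.X * B (i - 1) =
        Polynomial.C c1 * B (i - 3) + Polynomial.C a1 * B (i - 1) + Polynomial.C b1 * B (i + 1))
    (hBeven : ∀ i, 3 ≤ i → Even i →
      Polynomial.X * B (i - 1) =
        Polynomial.C c2 * B (i - 3) + Polynomial.C a2 * B (i - 1) + Polynomial.C b2 * B (i + 1))
    (j : ℕ) (hj1 : 1 ≤ j) (hjn : j ≤ n) (hjodd : Odd j)
    (α : ℂ) (hαform : α = a1 - 2 * s1 * (Real.cos ((j + 1) * Real.pi / (n + 2)) : ℂ))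
    (hroot : (B n).eval α = 0) :
    (pentaK n a1 a2 b1 b2 c1 c2).mulVec (fun i : Fin n => (B i.val).eval α) =
      α • (fun i : Fin n => (B i.val).eval α) ∧
    (fun i : Fin n => (B i.val).eval α) ≠ 0 := by
  have hn2 : 2 ≤ n := by omega
  -- all odd-indexed polynomials vanish
  have hzero : ∀ m : ℕ, B (2 * m + 1) = 0 := by
    intro m
    induction m using Nat.strong_induction_on with
    | _ m ih =>
      match m with
      | 0 => exact B1
      | 1 =>
        have h := hBr1
        rw [B1] at h
        simp only [mul_zero, zero_add] at h
        rcases mul_eq_zero.mp h.symm with h' | h'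
        · exact absurd h' (by simp [hb2])
        · exact h'
      | (m + 2) =>
        have h := hBeven (2 * (m + 2)) (by omega) ⟨m + 2, by ring⟩
        have e1 : 2 * (m + 2) - 1 = 2 * (m + 1) + 1 := by omega
        have e2 : 2 * (m + 2) - 3 = 2 * m + 1 := by omega
        have e3 : 2 * (m + 2) + 1 = 2 * (m + 2) + 1 := rfl
        rw [e1, e2, ih (m + 1) (by omega), ih m (by omega)] at h
        simp only [mul_zero, zero_add, add_zero] at h
        rcases mul_eq_zero.mp h.symm with h' | h'
        · exact absurd h' (by simp [hb2])
        · exact h'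
  have hw0 : ∀ k : ℕ, k % 2 = 1 → (B k).eval α = 0 := by
    intro k hk
    obtain ⟨m, rfl⟩ : ∃ m, k = 2 * m + 1 := ⟨k / 2, by omega⟩
    rw [hzero m]; simp
  have hrec0 : α * (B 0).eval α = a1 * (B 0).eval α + b1 * (B 2).eval α := by
    have h := congrArg (Polynomial.eval α) hBr0
    simpa using h
  have hrecE : ∀ k : ℕ, 2 ≤ k → k % 2 = 0 →
      α * (B k).eval α = c1 * (B (k - 2)).eval α + a1 * (B k).eval α + b1 * (B (k + 2)).eval α := by
    intro k hk2 hke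
    have h := hBodd (k + 1) (by omega) (Nat.odd_iff.mpr (by omega))
    have e1 : k + 1 - 1 = k := by omega
    have e2 : k + 1 - 3 = k - 2 := by omega
    have e3 : k + 1 + 1 = k + 2 := by omega
    rw [e1, e2, e3] at h
    have h2 := congrArg (Polynomial.eval α) h
    simpa using h2
  constructor
  · funext i
    simp only [Matrix.mulVec, dotProduct, Pi.smul_apply, smul_eq_mul]
    have hsum : ∑ x : Fin n, pentaK n a1 a2 b1 b2 c1 c2 i x * (B (x : ℕ)).eval α
        = ∑ k ∈ Finset.range n,
            ((if (i : ℕ) = k then (if (i : ℕ) % 2 = 0 then a1 else a2)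
              else if k = (i : ℕ) + 2 then (if (i : ℕ) % 2 = 0 then b1 else b2)
              else if (i : ℕ) = k + 2 then (if k % 2 = 0 then c1 else c2)
              else 0) * (B k).eval α) := by
      rw [← Fin.sum_univ_eq_sum_range (fun k =>
            ((if (i : ℕ) = k then (if (i : ℕ) % 2 = 0 then a1 else a2)
              else if k = (i : ℕ) + 2 then (if (i : ℕ) % 2 = 0 then b1 else b2)
              else if (i : ℕ) = k + 2 then (if k % 2 = 0 then c1 else c2)
              else 0) * (B k).eval α)) n]
      exact Finset.sum_congr rfl fun x _ => by simp [pentaK]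
    rw [hsum]
    rcases Nat.even_or_odd (i : ℕ) with hpar | hpar
    · -- even row
      have heven : (i : ℕ) % 2 = 0 := Nat.even_iff.mp hpar
      have hdecomp : ∀ k : ℕ,
          ((if (i : ℕ) = k then (if (i : ℕ) % 2 = 0 then a1 else a2)
            else if k = (i : ℕ) + 2 then (if (i : ℕ) % 2 = 0 then b1 else b2)
            else if (i : ℕ) = k + 2 then (if k % 2 = 0 then c1 else c2)
            else 0) * (B k).eval α)
          = (if k = (i : ℕ) then a1 * (B (i : ℕ)).eval α else 0)
            + (if k = (i : ℕ) + 2 then b1 * (B ((i : ℕ) + 2)).eval α else 0)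
            + (if k + 2 = (i : ℕ) then c1 * (B k).eval α else 0) := by
        intro k
        split_ifs with h1 h2 h3 h4 h5 h6 h7 h8 h9 h10 h11 h12 h13 h14 <;>
          first
            | omega
            | (subst_vars; ring)
            | ring
      rw [Finset.sum_congr rfl fun k _ => hdecomp k, Finset.sum_add_distrib,
        Finset.sum_add_distrib]
      have hS1 : ∑ k ∈ Finset.range n, (if k = (i : ℕ) then a1 * (B (i : ℕ)).eval α else 0)
          = a1 * (B (i : ℕ)).eval α := by
        rw [Finset.sum_ite_eq' (Finset.range n) (i : ℕ)]
        simp [i.isLt]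
      have hS2 : ∑ k ∈ Finset.range n, (if k = (i : ℕ) + 2 then b1 * (B ((i : ℕ) + 2)).eval α else 0)
          = if (i : ℕ) + 2 < n then b1 * (B ((i : ℕ) + 2)).eval α else 0 := by
        rw [Finset.sum_ite_eq' (Finset.range n) ((i : ℕ) + 2)]
        simp
      rw [hS1, hS2]
      by_cases hc : 2 ≤ (i : ℕ)
      · have hS3 : ∑ k ∈ Finset.range n, (if k + 2 = (i : ℕ) then c1 * (B k).eval α else 0)
            = c1 * (B ((i : ℕ) - 2)).eval α := by
          have : ∀ k ∈ Finset.range n, (if k + 2 = (i : ℕ) then c1 * (B k).eval α else 0)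
              = (if k = (i : ℕ) - 2 then c1 * (B ((i : ℕ) - 2)).eval α else 0) := by
            intro k _
            split_ifs with h1 h2 h3 <;>
              first
                | omega
                | (rw [show k = (i : ℕ) - 2 from by omega])
                | rfl
          rw [Finset.sum_congr rfl this, Finset.sum_ite_eq' (Finset.range n) ((i : ℕ) - 2)]
          have : (i : ℕ) - 2 ∈ Finset.range n := Finset.mem_range.mpr (by omega)
          simp [this]
        rw [hS3]
        have h2 := hrecE (i : ℕ) hc heven
        by_cases hb : (i : ℕ) + 2 < n
        · rw [if_pos hb]
          linear_combination -h2
        · have he : (i : ℕ) + 2 = n := by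
            have := i.isLt
            omega
          rw [if_neg hb]
          rw [he, hroot, mul_zero, add_zero] at h2
          linear_combination -h2
      · have hi0 : (i : ℕ) = 0 := by omega
        have hS3 : ∑ k ∈ Finset.range n, (if k + 2 = (i : ℕ) then c1 * (B k).eval α else 0)
            = 0 := by
          apply Finset.sum_eq_zero
          intro k _
          rw [if_neg (by omega)]
        rw [hS3, hi0]
        by_cases hb : (0 : ℕ) + 2 < n
        · rw [if_pos hb]
          linear_combination -hrec0
        · have he : n = 2 := by omega
          rw [if_neg hb]
          have h2 := hrec0
          rw [show (2 : ℕ) = n from he.symm, hroot, mul_zero, add_zero] at h2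
          linear_combination -h2
    · -- odd row
      have hodd : (i : ℕ) % 2 = 1 := Nat.odd_iff.mp hpar
      rw [hw0 (i : ℕ) hodd, mul_zero]
      apply Finset.sum_eq_zero
      intro k _
      split_ifs with h1 h2 h3 h4 h5 h6 <;>
        first
          | omega
          | (rw [hw0 k (by omega)]; ring)
          | ring
  · intro h
    have h0 : (0 : ℕ) < n := by omega
    have := congrFun h ⟨0, h0⟩
    simp [B0] at this
end

section
/- For n even and α a zero of the polynomial A_{n+1}, the vector (A_0(α), A_1(α), …, A_{n−1}(α))ᵀ is an eigenvector of the pentadiagonal 2-Toeplitz matrix K_n associated with eigenvalue α, where {A_i} is the associated polynomial sequence; this vector is nonzero since A_1(α)=1. -/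
open Polynomial Matrix

lemma sum_penta {n : ℕ} (i : Fin n) (d b c : ℂ) (w : Fin n → ℂ) :
    (∑ j : Fin n, (if i.val = j.val then d
      else if j.val = i.val + 2 then b
      else if i.val = j.val + 2 then c else 0) * w j)
    = d * w i + (if h : i.val + 2 < n then b * w ⟨i.val + 2, h⟩ else 0)
      + (if h : 2 ≤ i.val then c * w ⟨i.val - 2, by omega⟩ else 0) := by
  have key : ∀ j : Fin n, (if i.val = j.val then d
      else if j.val = i.val + 2 then b
      else if i.val = j.val + 2 then c else 0) * w j =
      (if j = i then d * w j else 0) + (if j.val = i.val + 2 then b * w j else 0)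
      + (if i.val = j.val + 2 then c * w j else 0) := by
    intro j
    by_cases h1 : i.val = j.val
    · have hj : j = i := Fin.ext h1.symm
      rw [if_pos h1, if_pos hj, if_neg (by omega : ¬ j.val = i.val + 2),
        if_neg (by omega : ¬ i.val = j.val + 2)]
      ring
    · have hne : ¬ j = i := fun h => h1 (by rw [h])
      by_cases h2 : j.val = i.val + 2
      · rw [if_neg h1, if_pos h2, if_neg hne, if_pos h2,
          if_neg (by omega : ¬ i.val = j.val + 2)]
        ring
      · by_cases h3 : i.val = j.val + 2
        · rw [if_neg h1, if_neg h2, if_pos h3, if_neg hne, if_neg h2, if_pos h3]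
          ring
        · rw [if_neg h1, if_neg h2, if_neg h3, if_neg hne, if_neg h2, if_neg h3]
          ring
  rw [Finset.sum_congr rfl (fun j _ => key j), Finset.sum_add_distrib, Finset.sum_add_distrib]
  congr 1
  congr 1
  · simp
  · by_cases h : i.val + 2 < n
    · rw [dif_pos h]
      rw [show (∑ j : Fin n, if j.val = i.val + 2 then b * w j else 0) =
          ∑ j : Fin n, if j = (⟨i.val + 2, h⟩ : Fin n) then b * w j else 0 from
        Finset.sum_congr rfl (fun j _ => by congr 1; simp [Fin.ext_iff])]
      simp
    · rw [dif_neg h]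
      apply Finset.sum_eq_zero
      intro j _
      rw [if_neg (by omega)]
  · by_cases h : 2 ≤ i.val
    · rw [dif_pos h]
      have h2 : i.val - 2 < n := by omega
      rw [show (∑ j : Fin n, if i.val = j.val + 2 then c * w j else 0) =
          ∑ j : Fin n, if j = (⟨i.val - 2, h2⟩ : Fin n) then c * w j else 0 from
        Finset.sum_congr rfl (fun j _ => by congr 1; simp [Fin.ext_iff]; omega)]
      simp
    · rw [dif_neg h]
      apply Finset.sum_eq_zero
      intro j _
      rw [if_neg (by omega)]

theorem stmt13 (a1 a2 b1 b2 c1 c2 : ℂ) (hb1 : b1 ≠ 0) (hb2 : b2 ≠ 0) (hc1 : c1 ≠ 0) (hc2 : c2 ≠ 0)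
    (t : ℕ) (ht : 1 ≤ t) (n : ℕ) (hn : n = 2 * t)
    (A : ℕ → Polynomial ℂ)
    (A0 : A 0 = 0) (A1 : A 1 = 1)
    (hAr0 : Polynomial.X * A 0 = Polynomial.C a1 * A 0 + Polynomial.C b1 * A 2)
    (hAr1 : Polynomial.X * A 1 = Polynomial.C a2 * A 1 + Polynomial.C b2 * A 3)
    (hAodd : ∀ i, 3 ≤ i → Odd i →
      Polynomial.X * A (i - 1) =
        Polynomial.C c1 * A (i - 3) + Polynomial.C a1 * A (i - 1) + Polynomial.C b1 * A (i + 1))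
    (hAeven : ∀ i, 3 ≤ i → Even i →
      Polynomial.X * A (i - 1) =
        Polynomial.C c2 * A (i - 3) + Polynomial.C a2 * A (i - 1) + Polynomial.C b2 * A (i + 1))
    (α : ℂ) (hroot : (A (n + 1)).eval α = 0) :
    (pentaK n a1 a2 b1 b2 c1 c2).mulVec (fun i : Fin n => (A i.val).eval α) =
      α • (fun i : Fin n => (A i.val).eval α) ∧
    (fun i : Fin n => (A i.val).eval α) ≠ 0 := by
  have hCb1 : (Polynomial.C b1 : Polynomial ℂ) ≠ 0 := by simpa using hb1
  have hA2 : A 2 = 0 := by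
    rw [A0, mul_zero, mul_zero, zero_add] at hAr0
    exact (mul_eq_zero.mp hAr0.symm).resolve_left hCb1
  have heven : ∀ m, A (2 * m) = 0 := by
    intro m
    induction m using Nat.strong_induction_on with
    | _ m ih =>
      match m, ih with
      | 0, _ => simpa using A0
      | 1, _ => simpa using hA2
      | (m + 2), ih =>
        have h1 : A (2 * m) = 0 := ih m (by omega)
        have h2 : A (2 * (m + 1)) = 0 := ih (m + 1) (by omega)
        have h := hAodd (2 * m + 3) (by omega) ⟨m + 1, by ring⟩
        have e1 : 2 * m + 3 - 1 = 2 * (m + 1) := by omega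
        have e2 : 2 * m + 3 - 3 = 2 * m := by omega
        have e3 : 2 * m + 3 + 1 = 2 * (m + 2) := by omega
        rw [e1, e2, e3, h1, h2, mul_zero, mul_zero, mul_zero, zero_add, zero_add] at h
        exact (mul_eq_zero.mp h.symm).resolve_left hCb1
  have hn2 : 2 ≤ n := by omega
  have hwe : ∀ k, k % 2 = 0 → (A k).eval α = 0 := by
    intro k hk
    have hk2 : k = 2 * (k / 2) := by omega
    rw [hk2, heven]
    simp
  have hrec : ∀ k, 3 ≤ k → k % 2 = 1 →
      α * (A k).eval α = c2 * (A (k - 2)).eval α + a2 * (A k).eval α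
        + b2 * (A (k + 2)).eval α := by
    intro k h3 hk
    have h := hAeven (k + 1) (by omega) ⟨(k + 1) / 2, by omega⟩
    have e1 : k + 1 - 1 = k := by omega
    have e2 : k + 1 - 3 = k - 2 := by omega
    rw [e1, e2] at h
    have := congrArg (Polynomial.eval α) h
    simpa using this
  have hrec1 : α * (A 1).eval α = a2 * (A 1).eval α + b2 * (A 3).eval α := by
    have := congrArg (Polynomial.eval α) hAr1
    simpa using this
  constructor
  · funext i
    rw [mulVec, dotProduct]
    simp only [pentaK, Matrix.of_apply, Pi.smul_apply, smul_eq_mul]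
    have fix : ∀ j : Fin n, (if (i : ℕ) = j then (if (i : ℕ) % 2 = 0 then a1 else a2)
        else if (j : ℕ) = (i : ℕ) + 2 then (if (i : ℕ) % 2 = 0 then b1 else b2)
        else if (i : ℕ) = (j : ℕ) + 2 then (if (j : ℕ) % 2 = 0 then c1 else c2) else 0)
        = (if (i : ℕ) = j then (if (i : ℕ) % 2 = 0 then a1 else a2)
        else if (j : ℕ) = (i : ℕ) + 2 then (if (i : ℕ) % 2 = 0 then b1 else b2)
        else if (i : ℕ) = (j : ℕ) + 2 then (if (i : ℕ) % 2 = 0 then c1 else c2) else 0) := by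
      intro j
      by_cases h3 : (i : ℕ) = (j : ℕ) + 2
      · have hp : (j : ℕ) % 2 = (i : ℕ) % 2 := by omega
        rw [hp]
      · simp [h3]
    simp only [fix]
    rw [sum_penta]
    simp only [Fin.val_mk]
    by_cases hpar : i.val % 2 = 0
    · simp only [if_pos hpar]
      rw [hwe i.val hpar, mul_zero, mul_zero]
      by_cases h1 : i.val + 2 < n <;> by_cases h2 : 2 ≤ i.val <;>
        simp [h1, h2, hwe (i.val + 2) (by omega), hwe (i.val - 2) (by omega)]
    · have hpar' : i.val % 2 = 1 := by omega
      simp only [if_neg hpar]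
      by_cases hi1 : i.val = 1
      · simp only [hi1]
        rw [dif_neg (by omega : ¬ (2 ≤ 1))]
        by_cases htop : 1 + 2 < n
        · rw [dif_pos htop]
          rw [add_zero]
          linear_combination -hrec1
        · rw [dif_neg htop]
          have h3 : (A 3).eval α = 0 := by rw [show (3 : ℕ) = n + 1 by omega]; exact hroot
          linear_combination -hrec1 - b2 * h3
      · have hi3 : 3 ≤ i.val := by omega
        rw [dif_pos (by omega : 2 ≤ i.val)]
        have hr := hrec i.val hi3 hpar'
        by_cases htop : i.val + 2 < n
        · rw [dif_pos htop]
          linear_combination -hr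
        · rw [dif_neg htop]
          have hi' : i.val + 2 = n + 1 := by omega
          have hz : (A (i.val + 2)).eval α = 0 := by rw [hi']; exact hroot
          linear_combination -hr - b2 * hz
  · intro hcontra
    have h1 : (1 : ℕ) < n := by omega
    have := congrFun hcontra ⟨1, h1⟩
    simp [A1] at this
end

section
/- Let K_6 be the 6×6 pentadiagonal 2-Toeplitz matrix. Its eigenvalues are a_1 − √(2b_1c_1), a_2 − √(2b_2c_2), a_1, a_2, a_1 + √(2b_1c_1), a_2 + √(2b_2c_2); in particular the characteristic polynomial of K_6 equals (x−a_1)·(x−a_2)·((x−a_1)²−2b_1c_1)·((x−a_2)²−2b_2c_2). -/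
open Polynomial Matrix

set_option maxRecDepth 10000 in
set_option maxHeartbeats 1600000 in
private lemma detlemma (a1 a2 b1 b2 c1 c2 x : ℂ) :
    (!![x-a1, 0-0, 0-b1, 0-0, 0-0, 0-0;
        0-0, x-a2, 0-0, 0-b2, 0-0, 0-0;
        0-c1, 0-0, x-a1, 0-0, 0-b1, 0-0;
        0-0, 0-c2, 0-0, x-a2, 0-0, 0-b2;
        0-0, 0-0, 0-c1, 0-0, x-a1, 0-0;
        0-0, 0-0, 0-0, 0-c2, 0-0, x-a2]).det =
    (x-a1)*(x-a2)*((x-a1)^2-2*b1*c1)*((x-a2)^2-2*b2*c2) := by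
  simp [Matrix.det_succ_row_zero, Fin.sum_univ_succ, Fin.succAbove]
  norm_num [Fin.lt_def, Fin.le_def, Fin.ext_iff]
  ring

private lemma scalar_sub (a1 a2 b1 b2 c1 c2 x : ℂ) :
    Matrix.scalar (Fin 6) x - pentaK 6 a1 a2 b1 b2 c1 c2 =
      !![x-a1, 0-0, 0-b1, 0-0, 0-0, 0-0;
         0-0, x-a2, 0-0, 0-b2, 0-0, 0-0;
         0-c1, 0-0, x-a1, 0-0, 0-b1, 0-0;
         0-0, 0-c2, 0-0, x-a2, 0-0, 0-b2;
         0-0, 0-0, 0-c1, 0-0, x-a1, 0-0;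
         0-0, 0-0, 0-0, 0-c2, 0-0, x-a2] := by
  refine Matrix.ext fun i j => ?_
  fin_cases i <;> fin_cases j <;> rfl

private lemma eval_cp (a1 a2 b1 b2 c1 c2 x : ℂ) :
    (pentaK 6 a1 a2 b1 b2 c1 c2).charpoly.eval x =
    (x-a1)*(x-a2)*((x-a1)^2-2*b1*c1)*((x-a2)^2-2*b2*c2) := by
  rw [Matrix.charpoly, _root_.eval_det, matPolyEquiv_charmatrix]
  have h : Polynomial.eval (Matrix.scalar (Fin 6) x)
      (X - Polynomial.C (pentaK 6 a1 a2 b1 b2 c1 c2)) =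
      Matrix.scalar (Fin 6) x - pentaK 6 a1 a2 b1 b2 c1 c2 := by
    simp
  rw [h, scalar_sub, detlemma]

set_option maxRecDepth 10000 in
set_option maxHeartbeats 1600000 in
private lemma hasEig (A : Matrix (Fin 6) (Fin 6) ℂ) (μ : ℂ)
    (h : A.charpoly.eval μ = 0) :
    Module.End.HasEigenvalue (Matrix.toLin' A) μ := by
  have hd : (Matrix.scalar (Fin 6) μ - A).det = 0 := by
    rw [Matrix.charpoly, _root_.eval_det, matPolyEquiv_charmatrix] at h
    simpa using h
  obtain ⟨v, hv0, hv⟩ := Matrix.exists_mulVec_eq_zero_iff.mpr hd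
  refine Module.End.hasEigenvalue_of_hasEigenvector (x := v) ⟨?_, hv0⟩
  rw [Module.End.mem_eigenspace_iff, Matrix.toLin'_apply]
  rw [Matrix.sub_mulVec, sub_eq_zero] at hv
  have : (Matrix.scalar (Fin 6) μ) *ᵥ v = μ • v := by
    funext i
    simp [Matrix.scalar, Matrix.mulVec_diagonal]
  rw [this] at hv
  exact hv.symm

theorem stmt15 (a1 a2 b1 b2 c1 c2 : ℂ) (hb1 : b1 ≠ 0) (hb2 : b2 ≠ 0)
    (hc1 : c1 ≠ 0) (hc2 : c2 ≠ 0)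
    (s1 s2 : ℂ) (hs1 : s1 ^ 2 = 2 * b1 * c1) (hs2 : s2 ^ 2 = 2 * b2 * c2) :
    (pentaK 6 a1 a2 b1 b2 c1 c2).charpoly =
      (Polynomial.X - Polynomial.C a1) * (Polynomial.X - Polynomial.C a2) *
        ((Polynomial.X - Polynomial.C a1) ^ 2 - Polynomial.C (2 * b1 * c1)) *
        ((Polynomial.X - Polynomial.C a2) ^ 2 - Polynomial.C (2 * b2 * c2)) ∧
    Module.End.HasEigenvalue (Matrix.toLin' (pentaK 6 a1 a2 b1 b2 c1 c2)) (a1 - s1) ∧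
    Module.End.HasEigenvalue (Matrix.toLin' (pentaK 6 a1 a2 b1 b2 c1 c2)) (a2 - s2) ∧
    Module.End.HasEigenvalue (Matrix.toLin' (pentaK 6 a1 a2 b1 b2 c1 c2)) a1 ∧
    Module.End.HasEigenvalue (Matrix.toLin' (pentaK 6 a1 a2 b1 b2 c1 c2)) a2 ∧
    Module.End.HasEigenvalue (Matrix.toLin' (pentaK 6 a1 a2 b1 b2 c1 c2)) (a1 + s1) ∧
    Module.End.HasEigenvalue (Matrix.toLin' (pentaK 6 a1 a2 b1 b2 c1 c2)) (a2 + s2) := by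
  refine ⟨?_, ?_, ?_, ?_, ?_, ?_, ?_⟩
  · apply Polynomial.funext
    intro x
    rw [eval_cp]
    simp [eval_mul, eval_sub, eval_pow]
  all_goals apply hasEig
  · rw [eval_cp]; apply mul_eq_zero_of_left; apply mul_eq_zero_of_right
    linear_combination hs1
  · rw [eval_cp]; apply mul_eq_zero_of_right
    linear_combination hs2
  · rw [eval_cp]; apply mul_eq_zero_of_left; apply mul_eq_zero_of_left
    apply mul_eq_zero_of_left; ring
  · rw [eval_cp]; apply mul_eq_zero_of_left; apply mul_eq_zero_of_left
    apply mul_eq_zero_of_right; ring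
  · rw [eval_cp]; apply mul_eq_zero_of_left; apply mul_eq_zero_of_right
    linear_combination hs1
  · rw [eval_cp]; apply mul_eq_zero_of_right
    linear_combination hs2
end

section
/- Let K_6 be the 6×6 pentadiagonal 2-Toeplitz matrix. For every natural number s, the (1,1) entry of K_6^s equals (1/4)·[(a_1+√(2b_1c_1))^s + 2·a_1^s + (a_1−√(2b_1c_1))^s], and the (1,3) entry of K_6^s equals (√2/4)·√(b_1/c_1)·[(a_1+√(2b_1c_1))^s − (a_1−√(2b_1c_1))^s]. -/
open Polynomial Matrix

theorem stmt16 (a1 a2 b1 b2 c1 c2 : ℂ) (hb1 : b1 ≠ 0) (hb2 : b2 ≠ 0)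
    (hc1 : c1 ≠ 0) (hc2 : c2 ≠ 0)
    (s1 r1 : ℂ) (hs1 : s1 ^ 2 = 2 * b1 * c1) (hr1 : r1 ^ 2 = b1 / c1)
    (hcompat : r1 * s1 = b1 * (Real.sqrt 2 : ℂ)) :
    ∀ s : ℕ,
      ((pentaK 6 a1 a2 b1 b2 c1 c2) ^ s) 0 0 =
        (1 / 4) * ((a1 + s1) ^ s + 2 * a1 ^ s + (a1 - s1) ^ s) ∧
      ((pentaK 6 a1 a2 b1 b2 c1 c2) ^ s) 0 2 =
        ((Real.sqrt 2 : ℂ) / 4) * r1 * ((a1 + s1) ^ s - (a1 - s1) ^ s) := by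
  set w : ℂ := (Real.sqrt 2 : ℂ) with hwdef
  have hw : w * w = 2 := by
    rw [hwdef, ← Complex.ofReal_mul, Real.mul_self_sqrt (by norm_num : (0:ℝ) ≤ 2)]
    norm_num
  have hs1ne : s1 ≠ 0 := by
    intro h
    rw [h, zero_pow two_ne_zero] at hs1
    exact (mul_ne_zero (mul_ne_zero (two_ne_zero) hb1) hc1) hs1.symm
  have hb : r1 ^ 2 * c1 = b1 := by
    rw [hr1]; field_simp
  have h4 : w * r1 * c1 = s1 := by
    apply mul_left_cancel₀ hs1ne
    linear_combination (w * c1) * hcompat + b1 * c1 * hw - hs1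
  have h5 : w * r1 * s1 = 2 * b1 := by
    linear_combination w * hcompat + b1 * hw
  have h6 : r1 ^ 2 * s1 = w * r1 * b1 := by
    linear_combination r1 * hcompat
  set K := pentaK 6 a1 a2 b1 b2 c1 c2 with hK
  have e0 : ((0 : Fin 6) : ℕ) = 0 := rfl
  have e1 : ((1 : Fin 6) : ℕ) = 1 := rfl
  have e2 : ((2 : Fin 6) : ℕ) = 2 := rfl
  have e3 : ((3 : Fin 6) : ℕ) = 3 := rfl
  have e4 : ((4 : Fin 6) : ℕ) = 4 := rfl
  have e5 : ((5 : Fin 6) : ℕ) = 5 := rfl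
  have key : ∀ s : ℕ,
      (K ^ s) 0 0 = (1 / 4) * ((a1 + s1) ^ s + 2 * a1 ^ s + (a1 - s1) ^ s) ∧
      (K ^ s) 0 1 = 0 ∧
      (K ^ s) 0 2 = (w / 4) * r1 * ((a1 + s1) ^ s - (a1 - s1) ^ s) ∧
      (K ^ s) 0 3 = 0 ∧
      (K ^ s) 0 4 = (r1 ^ 2 / 4) * ((a1 + s1) ^ s + (a1 - s1) ^ s - 2 * a1 ^ s) ∧
      (K ^ s) 0 5 = 0 := by
    intro s
    induction s with
    | zero =>
      refine ⟨?_, ?_, ?_, ?_, ?_, ?_⟩ <;>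
      · simp [Matrix.one_apply]
        try ring
        try tauto
    | succ n ih =>
      obtain ⟨h0, h1, h2, h3, hh4, hh5⟩ := ih
      rw [pow_succ]
      refine ⟨?_, ?_, ?_, ?_, ?_, ?_⟩ <;>
      · rw [Matrix.mul_apply, Fin.sum_univ_six, h0, h1, h2, h3, hh4, hh5]
        simp only [hK, pentaK, Matrix.of_apply, e0, e1, e2, e3, e4, e5]
        norm_num
        try linear_combination (((a1 + s1) ^ n - (a1 - s1) ^ n) / 4) * h4
        try linear_combination (((a1 + s1) ^ n + (a1 - s1) ^ n - 2 * a1 ^ n) / 4) * hb - (((a1 + s1) ^ n + (a1 - s1) ^ n) / 4) * h5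
        try linear_combination (((a1 + s1) ^ n - (a1 - s1) ^ n) / 4) * h6
        try linear_combination (-((a1 + s1) ^ n - (a1 - s1) ^ n) / 4) * h6
        try linear_combination (-((a1 + s1) ^ n - (a1 - s1) ^ n) / 4) * h4
  intro s
  exact ⟨(key s).1, (key s).2.2.1⟩
end

section
/- Let K_6 be the 6×6 pentadiagonal 2-Toeplitz matrix. For every natural number s, the (3,3) entry of K_6^s equals (1/2)·[(a_1+√(2b_1c_1))^s + (a_1−√(2b_1c_1))^s], and the (5,1) entry of K_6^s equals (c_1/(4b_1))·[(a_1+√(2b_1c_1))^s − 2·a_1^s + (a_1−√(2b_1c_1))^s]. -/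
open Polynomial Matrix

set_option maxHeartbeats 1600000 in
theorem stmt17 (a1 a2 b1 b2 c1 c2 : ℂ) (hb1 : b1 ≠ 0) (hb2 : b2 ≠ 0)
    (hc1 : c1 ≠ 0) (hc2 : c2 ≠ 0)
    (s1 : ℂ) (hs1 : s1 ^ 2 = 2 * b1 * c1) :
    ∀ s : ℕ,
      ((pentaK 6 a1 a2 b1 b2 c1 c2) ^ s) 2 2 =
        (1 / 2) * ((a1 + s1) ^ s + (a1 - s1) ^ s) ∧
      ((pentaK 6 a1 a2 b1 b2 c1 c2) ^ s) 4 0 =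
        (c1 / (4 * b1)) * ((a1 + s1) ^ s - 2 * a1 ^ s + (a1 - s1) ^ s) := by
  have hs1ne : s1 ≠ 0 := by
    intro h
    rw [h] at hs1
    norm_num at hs1
    rcases hs1 with h' | h'
    · exact hb1 h'
    · exact hc1 h'
  have hc : c1 = s1 ^ 2 / (2 * b1) := by
    field_simp
    linear_combination -hs1
  subst hc
  have e00 : (pentaK 6 a1 a2 b1 b2 (s1 ^ 2 / (2 * b1)) c2) 0 0 = a1 := rfl
  have e01 : (pentaK 6 a1 a2 b1 b2 (s1 ^ 2 / (2 * b1)) c2) 0 1 = (0:ℂ) := rfl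
  have e02 : (pentaK 6 a1 a2 b1 b2 (s1 ^ 2 / (2 * b1)) c2) 0 2 = b1 := rfl
  have e03 : (pentaK 6 a1 a2 b1 b2 (s1 ^ 2 / (2 * b1)) c2) 0 3 = (0:ℂ) := rfl
  have e04 : (pentaK 6 a1 a2 b1 b2 (s1 ^ 2 / (2 * b1)) c2) 0 4 = (0:ℂ) := rfl
  have e05 : (pentaK 6 a1 a2 b1 b2 (s1 ^ 2 / (2 * b1)) c2) 0 5 = (0:ℂ) := rfl
  have e10 : (pentaK 6 a1 a2 b1 b2 (s1 ^ 2 / (2 * b1)) c2) 1 0 = (0:ℂ) := rfl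
  have e11 : (pentaK 6 a1 a2 b1 b2 (s1 ^ 2 / (2 * b1)) c2) 1 1 = a2 := rfl
  have e12 : (pentaK 6 a1 a2 b1 b2 (s1 ^ 2 / (2 * b1)) c2) 1 2 = (0:ℂ) := rfl
  have e13 : (pentaK 6 a1 a2 b1 b2 (s1 ^ 2 / (2 * b1)) c2) 1 3 = b2 := rfl
  have e14 : (pentaK 6 a1 a2 b1 b2 (s1 ^ 2 / (2 * b1)) c2) 1 4 = (0:ℂ) := rfl
  have e15 : (pentaK 6 a1 a2 b1 b2 (s1 ^ 2 / (2 * b1)) c2) 1 5 = (0:ℂ) := rfl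
  have e20 : (pentaK 6 a1 a2 b1 b2 (s1 ^ 2 / (2 * b1)) c2) 2 0 = (s1 ^ 2 / (2 * b1)) := rfl
  have e21 : (pentaK 6 a1 a2 b1 b2 (s1 ^ 2 / (2 * b1)) c2) 2 1 = (0:ℂ) := rfl
  have e22 : (pentaK 6 a1 a2 b1 b2 (s1 ^ 2 / (2 * b1)) c2) 2 2 = a1 := rfl
  have e23 : (pentaK 6 a1 a2 b1 b2 (s1 ^ 2 / (2 * b1)) c2) 2 3 = (0:ℂ) := rfl
  have e24 : (pentaK 6 a1 a2 b1 b2 (s1 ^ 2 / (2 * b1)) c2) 2 4 = b1 := rfl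
  have e25 : (pentaK 6 a1 a2 b1 b2 (s1 ^ 2 / (2 * b1)) c2) 2 5 = (0:ℂ) := rfl
  have e30 : (pentaK 6 a1 a2 b1 b2 (s1 ^ 2 / (2 * b1)) c2) 3 0 = (0:ℂ) := rfl
  have e31 : (pentaK 6 a1 a2 b1 b2 (s1 ^ 2 / (2 * b1)) c2) 3 1 = c2 := rfl
  have e32 : (pentaK 6 a1 a2 b1 b2 (s1 ^ 2 / (2 * b1)) c2) 3 2 = (0:ℂ) := rfl
  have e33 : (pentaK 6 a1 a2 b1 b2 (s1 ^ 2 / (2 * b1)) c2) 3 3 = a2 := rfl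
  have e34 : (pentaK 6 a1 a2 b1 b2 (s1 ^ 2 / (2 * b1)) c2) 3 4 = (0:ℂ) := rfl
  have e35 : (pentaK 6 a1 a2 b1 b2 (s1 ^ 2 / (2 * b1)) c2) 3 5 = b2 := rfl
  have e40 : (pentaK 6 a1 a2 b1 b2 (s1 ^ 2 / (2 * b1)) c2) 4 0 = (0:ℂ) := rfl
  have e41 : (pentaK 6 a1 a2 b1 b2 (s1 ^ 2 / (2 * b1)) c2) 4 1 = (0:ℂ) := rfl
  have e42 : (pentaK 6 a1 a2 b1 b2 (s1 ^ 2 / (2 * b1)) c2) 4 2 = (s1 ^ 2 / (2 * b1)) := rfl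
  have e43 : (pentaK 6 a1 a2 b1 b2 (s1 ^ 2 / (2 * b1)) c2) 4 3 = (0:ℂ) := rfl
  have e44 : (pentaK 6 a1 a2 b1 b2 (s1 ^ 2 / (2 * b1)) c2) 4 4 = a1 := rfl
  have e45 : (pentaK 6 a1 a2 b1 b2 (s1 ^ 2 / (2 * b1)) c2) 4 5 = (0:ℂ) := rfl
  have e50 : (pentaK 6 a1 a2 b1 b2 (s1 ^ 2 / (2 * b1)) c2) 5 0 = (0:ℂ) := rfl
  have e51 : (pentaK 6 a1 a2 b1 b2 (s1 ^ 2 / (2 * b1)) c2) 5 1 = (0:ℂ) := rfl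
  have e52 : (pentaK 6 a1 a2 b1 b2 (s1 ^ 2 / (2 * b1)) c2) 5 2 = (0:ℂ) := rfl
  have e53 : (pentaK 6 a1 a2 b1 b2 (s1 ^ 2 / (2 * b1)) c2) 5 3 = c2 := rfl
  have e54 : (pentaK 6 a1 a2 b1 b2 (s1 ^ 2 / (2 * b1)) c2) 5 4 = (0:ℂ) := rfl
  have e55 : (pentaK 6 a1 a2 b1 b2 (s1 ^ 2 / (2 * b1)) c2) 5 5 = a2 := rfl
  have key : ∀ s : ℕ,
      ((pentaK 6 a1 a2 b1 b2 (s1 ^ 2 / (2 * b1)) c2) ^ s) 0 0 = (((a1+s1)^s+(a1-s1)^s)/2 + a1^s)/2 ∧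
      ((pentaK 6 a1 a2 b1 b2 (s1 ^ 2 / (2 * b1)) c2) ^ s) 0 1 = 0 ∧
      ((pentaK 6 a1 a2 b1 b2 (s1 ^ 2 / (2 * b1)) c2) ^ s) 0 2 = b1*((a1+s1)^s-(a1-s1)^s)/(2*s1) ∧
      ((pentaK 6 a1 a2 b1 b2 (s1 ^ 2 / (2 * b1)) c2) ^ s) 0 3 = 0 ∧
      ((pentaK 6 a1 a2 b1 b2 (s1 ^ 2 / (2 * b1)) c2) ^ s) 0 4 = b1^2*(((a1+s1)^s+(a1-s1)^s)/2 - a1^s)/s1^2 ∧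
      ((pentaK 6 a1 a2 b1 b2 (s1 ^ 2 / (2 * b1)) c2) ^ s) 0 5 = 0 ∧
      ((pentaK 6 a1 a2 b1 b2 (s1 ^ 2 / (2 * b1)) c2) ^ s) 2 0 = s1*((a1+s1)^s-(a1-s1)^s)/(4*b1) ∧
      ((pentaK 6 a1 a2 b1 b2 (s1 ^ 2 / (2 * b1)) c2) ^ s) 2 1 = 0 ∧
      ((pentaK 6 a1 a2 b1 b2 (s1 ^ 2 / (2 * b1)) c2) ^ s) 2 2 = ((a1+s1)^s+(a1-s1)^s)/2 ∧
      ((pentaK 6 a1 a2 b1 b2 (s1 ^ 2 / (2 * b1)) c2) ^ s) 2 3 = 0 ∧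
      ((pentaK 6 a1 a2 b1 b2 (s1 ^ 2 / (2 * b1)) c2) ^ s) 2 4 = b1*((a1+s1)^s-(a1-s1)^s)/(2*s1) ∧
      ((pentaK 6 a1 a2 b1 b2 (s1 ^ 2 / (2 * b1)) c2) ^ s) 2 5 = 0 ∧
      ((pentaK 6 a1 a2 b1 b2 (s1 ^ 2 / (2 * b1)) c2) ^ s) 4 0 = s1^2*(((a1+s1)^s+(a1-s1)^s)/2 - a1^s)/(4*b1^2) ∧
      ((pentaK 6 a1 a2 b1 b2 (s1 ^ 2 / (2 * b1)) c2) ^ s) 4 1 = 0 ∧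
      ((pentaK 6 a1 a2 b1 b2 (s1 ^ 2 / (2 * b1)) c2) ^ s) 4 2 = s1*((a1+s1)^s-(a1-s1)^s)/(4*b1) ∧
      ((pentaK 6 a1 a2 b1 b2 (s1 ^ 2 / (2 * b1)) c2) ^ s) 4 3 = 0 ∧
      ((pentaK 6 a1 a2 b1 b2 (s1 ^ 2 / (2 * b1)) c2) ^ s) 4 4 = (((a1+s1)^s+(a1-s1)^s)/2 + a1^s)/2 ∧
      ((pentaK 6 a1 a2 b1 b2 (s1 ^ 2 / (2 * b1)) c2) ^ s) 4 5 = 0 := by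
    intro s
    induction s with
    | zero =>
      refine ⟨?_, ?_, ?_, ?_, ?_, ?_, ?_, ?_, ?_, ?_, ?_, ?_, ?_, ?_, ?_, ?_, ?_, ?_⟩ <;>
      · simp only [pow_zero, Matrix.one_apply]
        first
        | (norm_num; done)
        | (norm_num <;> decide)
        | decide
    | succ s ih =>
      obtain ⟨h00, h01, h02, h03, h04, h05, h20, h21, h22, h23, h24, h25, h40, h41, h42, h43, h44, h45⟩ := ih
      refine ⟨?_, ?_, ?_, ?_, ?_, ?_, ?_, ?_, ?_, ?_, ?_, ?_, ?_, ?_, ?_, ?_, ?_, ?_⟩ <;>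
      · rw [pow_succ, Matrix.mul_apply, Fin.sum_univ_six]
        simp only [e00, e01, e02, e03, e04, e05, e10, e11, e12, e13, e14, e15, e20, e21, e22, e23, e24, e25, e30, e31, e32, e33, e34, e35, e40, e41, e42, e43, e44, e45, e50, e51, e52, e53, e54, e55,
          h00, h01, h02, h03, h04, h05, h20, h21, h22, h23, h24, h25, h40, h41, h42, h43, h44, h45]
        first
        | ring1
        | (field_simp
           try rw [div_add' _ _ _ (by simp [hb1, hs1ne])]
           try rw [div_mul_eq_mul_div]
           try rw [div_eq_iff (by simp [hb1, hs1ne])]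
           try rw [eq_div_iff (by simp [hb1, hs1ne])]
           first | ring1 | done)
  intro s
  obtain ⟨h00, h01, h02, h03, h04, h05, h20, h21, h22, h23, h24, h25, h40, h41, h42, h43, h44, h45⟩ := key s
  refine ⟨?_, ?_⟩
  · rw [h22]; ring
  · rw [h40]
    first
    | ring1
    | (field_simp
       try rw [div_eq_iff (by simp [hb1, hs1ne])]
       try rw [eq_div_iff (by simp [hb1, hs1ne])]
       first | ring1 | done)
end

section
/- Let K_6 be the 6×6 pentadiagonal 2-Toeplitz matrix with a_1·((a_1)²−2b_1c_1) ≠ 0 and a_2·((a_2)²−2b_2c_2) ≠ 0. Then K_6 is invertible and the (2,2) entry of K_6^{-1} equals (1/4)·[1/(a_2+√(2b_2c_2)) + 2/a_2 + 1/(a_2−√(2b_2c_2))] = ((a_2)² − b_2c_2)/(a_2·((a_2)² − 2b_2c_2)). -/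
open Polynomial Matrix

private lemma finmk2' (h : 2 < 6) : (⟨2, h⟩ : Fin 6) = 2 := rfl
private lemma finmk3' (h : 3 < 6) : (⟨3, h⟩ : Fin 6) = 3 := rfl
private lemma finmk4' (h : 4 < 6) : (⟨4, h⟩ : Fin 6) = 4 := rfl
private lemma finmk5' (h : 5 < 6) : (⟨5, h⟩ : Fin 6) = 5 := rfl
private lemma cons_val_five' {α : Type*} (x : α) (u : Fin 5 → α) : Matrix.vecCons x u 5 = u 4 := rfl

set_option maxHeartbeats 1000000 in
private lemma penta_mul_right (a1 a2 b1 b2 c1 c2 d1 d2 : ℂ)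
    (h1 : d1 = a1*(a1^2-2*b1*c1)) (h2 : d2 = a2*(a2^2-2*b2*c2))
    (hd1 : d1 ≠ 0) (hd2 : d2 ≠ 0) :
    (!![a1, 0, b1, 0, 0, 0;
         0, a2, 0, b2, 0, 0;
         c1, 0, a1, 0, b1, 0;
         0, c2, 0, a2, 0, b2;
         0, 0, c1, 0, a1, 0;
         0, 0, 0, c2, 0, a2] : Matrix (Fin 6) (Fin 6) ℂ) *
    !![(a1^2 - b1*c1)/d1, 0, -(a1*b1)/d1, 0, b1^2/d1, 0;
       0, (a2^2 - b2*c2)/d2, 0, -(a2*b2)/d2, 0, b2^2/d2;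
       -(a1*c1)/d1, 0, a1^2/d1, 0, -(a1*b1)/d1, 0;
       0, -(a2*c2)/d2, 0, a2^2/d2, 0, -(a2*b2)/d2;
       c1^2/d1, 0, -(a1*c1)/d1, 0, (a1^2 - b1*c1)/d1, 0;
       0, c2^2/d2, 0, -(a2*c2)/d2, 0, (a2^2 - b2*c2)/d2] = 1 := by
  have e1 : a1*(a1^2-2*b1*c1) ≠ 0 := h1 ▸ hd1
  have e2 : a2*(a2^2-2*b2*c2) ≠ 0 := h2 ▸ hd2
  subst h1 h2
  have f1 : -(a1*b1*c1*2)+a1^3 ≠ 0 := by intro h; apply e1; linear_combination h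
  have f2 : -(a2*b2*c2*2)+a2^3 ≠ 0 := by intro h; apply e2; linear_combination h
  have f3 : -(a1*c1*b1*2)+a1^3 ≠ 0 := by intro h; apply e1; linear_combination h
  have f4 : -(a2*c2*b2*2)+a2^3 ≠ 0 := by intro h; apply e2; linear_combination h
  have key : ∀ p a : ℂ, -(p*2)+a^3 ≠ 0 → -(p*(-(p*2)+a^3)⁻¹*2) + a^3*(-(p*2)+a^3)⁻¹ = 1 := by
    intro p a hp; rw [← mul_inv_cancel₀ hp]; ring
  ext i j
  fin_cases i <;> fin_cases j <;>
    simp [Matrix.mul_apply, Fin.sum_univ_six, Matrix.one_apply,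
      finmk2', finmk3', finmk4', finmk5', cons_val_five',
      Matrix.cons_val_zero, Matrix.cons_val_one, Matrix.cons_val_two, Matrix.cons_val_three,
      Matrix.cons_val_four, Matrix.head_cons, Matrix.vecHead, Matrix.vecTail] <;>
    field_simp <;> ring_nf <;> exact key _ _ ‹_›

theorem stmt18 (a1 a2 b1 b2 c1 c2 : ℂ) (ha1 : a1 ≠ 0) (ha2 : a2 ≠ 0)
    (hb1 : b1 ≠ 0) (hb2 : b2 ≠ 0) (hc1 : c1 ≠ 0) (hc2 : c2 ≠ 0)
    (h1 : a1 * (a1 ^ 2 - 2 * b1 * c1) ≠ 0) (h2 : a2 * (a2 ^ 2 - 2 * b2 * c2) ≠ 0)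
    (s2 : ℂ) (hs2 : s2 ^ 2 = 2 * b2 * c2) :
    IsUnit (pentaK 6 a1 a2 b1 b2 c1 c2) ∧
    (pentaK 6 a1 a2 b1 b2 c1 c2)⁻¹ 1 1 =
      (1 / 4) * (1 / (a2 + s2) + 2 / a2 + 1 / (a2 - s2)) ∧
    (pentaK 6 a1 a2 b1 b2 c1 c2)⁻¹ 1 1 = (a2 ^ 2 - b2 * c2) / (a2 * (a2 ^ 2 - 2 * b2 * c2)) := by
  set d1 := a1 * (a1 ^ 2 - 2 * b1 * c1) with hd1
  set d2 := a2 * (a2 ^ 2 - 2 * b2 * c2) with hd2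
  have hK : pentaK 6 a1 a2 b1 b2 c1 c2 =
      !![a1, 0, b1, 0, 0, 0;
         0, a2, 0, b2, 0, 0;
         c1, 0, a1, 0, b1, 0;
         0, c2, 0, a2, 0, b2;
         0, 0, c1, 0, a1, 0;
         0, 0, 0, c2, 0, a2] := by
    ext i j
    fin_cases i <;> fin_cases j <;> rfl
  have hKB : pentaK 6 a1 a2 b1 b2 c1 c2 *
      !![(a1^2 - b1*c1)/d1, 0, -(a1*b1)/d1, 0, b1^2/d1, 0;
         0, (a2^2 - b2*c2)/d2, 0, -(a2*b2)/d2, 0, b2^2/d2;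
         -(a1*c1)/d1, 0, a1^2/d1, 0, -(a1*b1)/d1, 0;
         0, -(a2*c2)/d2, 0, a2^2/d2, 0, -(a2*b2)/d2;
         c1^2/d1, 0, -(a1*c1)/d1, 0, (a1^2 - b1*c1)/d1, 0;
         0, c2^2/d2, 0, -(a2*c2)/d2, 0, (a2^2 - b2*c2)/d2] = 1 := by
    rw [hK]
    exact penta_mul_right a1 a2 b1 b2 c1 c2 d1 d2 hd1 hd2 h1 h2
  have hinv := Matrix.inv_eq_right_inv hKB
  have hval : (pentaK 6 a1 a2 b1 b2 c1 c2)⁻¹ 1 1 = (a2^2 - b2*c2)/d2 := by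
    rw [hinv]
    simp
  have hps : a2 + s2 ≠ 0 := by
    intro h
    apply h2
    have hs : s2 = -a2 := by linear_combination h
    have : a2 ^ 2 - 2 * b2 * c2 = 0 := by rw [← hs2, hs]; ring
    rw [hd2, this]; ring
  have hms : a2 - s2 ≠ 0 := by
    intro h
    apply h2
    have hs : s2 = a2 := by linear_combination -h
    have : a2 ^ 2 - 2 * b2 * c2 = 0 := by rw [← hs2, hs]; ring
    rw [hd2, this]; ring
  refine ⟨(Matrix.isUnit_iff_isUnit_det _).mpr (Matrix.isUnit_det_of_right_inverse hKB), ?_, ?_⟩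
  · rw [hval, hd2]
    have hbc : b2 * c2 = s2 ^ 2 / 2 := by linear_combination (-1/2 : ℂ) * hs2
    rw [hbc]
    have hysq : a2 ^ 2 - 2 * b2 * c2 = (a2 + s2) * (a2 - s2) := by linear_combination hs2
    rw [hysq]
    field_simp
    ring
  · rw [hval, hd2]
end
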